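/- arXiv:2001.02207 — 6 statements merged into one kernel-verified Lean document; each statement's English description precedes it below -/
import Mathlib

section
/- Let D be a well generated triangulated category, let ω be a partial silting object of D, and consider the induced recollement ω^{⊥ℤ} ⇄ D ⇄ Loc(ω) with i_* : ω^{⊥ℤ} → D and j_! : Loc(ω) → D the inclusions. Let σ be a silting object of ω^{⊥ℤ}. Assume that (1) the class (i_*σ)^{⊥>0} ∩ (j_!ω)^{⊥>0} is closed under coproducts in D, and (2) Hom_D(i_*σ, j_!ω[k]) = 0 for all integers k ≥ 2. Let I = Hom_D(i_*σ, j_!ω[1]), let α : (i_*σ)^{(I)} → j_!ω[1] be the canonically induced map, and let σ̃ be the cocone of α, i.e. there is a triangle j_!ω → σ̃ → (i_*σ)^{(I)} --α--> j_!ω[1]. Then σ̃ ⊕ i_*σ is a silting object of D. -/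
open CategoryTheory Limits Pretriangulated

universe v u u₁ u₂ u₃

namespace Glue

variable {C : Type u} [Category.{v} C] [Preadditive C]

section Shift
variable [HasShift C ℤ]

/-- `Hom_C(X, Y⟦k⟧) = 0`. -/
def homShiftZero (X Y : C) (k : ℤ) : Prop := ∀ f : X ⟶ Y⟦k⟧, f = 0

/-- `Y ∈ X^{⊥>0}`. -/
def perpGT (X Y : C) : Prop := ∀ k : ℤ, 0 < k → homShiftZero X Y k

/-- `Y ∈ X^{⊥ℤ}`. -/
def perpZ (X Y : C) : Prop := ∀ k : ℤ, homShiftZero X Y k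

/-- `Y ∈ X^{⊥≥0}`. -/
def perpGE (X Y : C) : Prop := ∀ k : ℤ, 0 ≤ k → homShiftZero X Y k

/-- `Y ∈ X^{⊥≤0}`. -/
def perpLE (X Y : C) : Prop := ∀ k : ℤ, k ≤ 0 → homShiftZero X Y k

end Shift

/-- A class of objects is closed under (set-indexed) coproducts. -/
def ClosedUnderCoproducts (S : Set C) : Prop :=
  ∀ (J : Type v) (f : J → C) (c : Cofan f), IsColimit c → (∀ j, f j ∈ S) → c.pt ∈ S

section Coprod
variable [HasCoproducts.{v} C]

/-- An object is `κ`-small: any map to a coproduct factors through a subcoproduct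
with fewer than `κ` terms. -/
def IsKappaSmall (κ : Cardinal.{v}) (X : C) : Prop :=
  ∀ (J : Type v) (Y : J → C) (h : X ⟶ ∐ Y), ∃ Ω : Set J, Cardinal.mk Ω < κ ∧
    ∃ g : X ⟶ ∐ (fun ω : Ω => Y ω.1), h = g ≫ Sigma.desc (fun ω => Sigma.ι Y ω.1)

end Coprod

section WG
variable (C) [HasShift C ℤ] [HasCoproducts.{v} C]

/-- A triangulated category with coproducts is well generated if it admits a set of
`κ`-small weak generators satisfying the surjectivity condition of Krause. -/
def IsWellGenerated : Prop :=
  ∃ κ : Cardinal.{v}, κ.IsRegular ∧ ∃ S : Set C,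
    (∀ X ∈ S, IsKappaSmall κ X) ∧
    (∀ Y : C, (∀ X ∈ S, perpZ X Y) → IsZero Y) ∧
    (∀ (J : Type v) (A B : J → C) (g : ∀ j, A j ⟶ B j),
      (∀ X ∈ S, ∀ j, Function.Surjective (fun f : X ⟶ A j => f ≫ g j)) →
      ∀ X ∈ S, Function.Surjective (fun f : X ⟶ ∐ A => f ≫ Limits.Sigma.map g))

end WG

section Silting
variable [HasShift C ℤ]

/-- A partial silting object. -/
def IsPartialSilting (σ : C) : Prop :=
  perpGT σ σ ∧ ClosedUnderCoproducts {Y : C | perpGT σ Y}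

/-- A silting object. -/
def IsSilting (σ : C) : Prop :=
  IsPartialSilting σ ∧ ∀ Y : C, perpZ σ Y → IsZero Y

/-- A tilting object : silting and `σ^{(J)} ∈ σ^{⊥≠0}` for every set `J`. -/
def IsTilting [HasCoproducts.{v} C] (σ : C) : Prop :=
  IsSilting σ ∧ ∀ (J : Type v) (k : ℤ), k ≠ 0 → homShiftZero σ (∐ (fun _ : J => σ)) k

end Silting


section Loc
variable [HasZeroObject C] [HasShift C ℤ]
  [∀ n : ℤ, (shiftFunctor C n).Additive] [Pretriangulated C]

/-- A localizing subcategory: a triangulated subcategory closed under coproducts. -/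
def IsLocalizingSub (S : Set C) : Prop :=
  (∀ ⦃X Y : C⦄, (X ≅ Y) → X ∈ S → Y ∈ S) ∧
  (∃ Z : C, IsZero Z ∧ Z ∈ S) ∧
  (∀ X ∈ S, ∀ k : ℤ, (X⟦k⟧ : C) ∈ S) ∧
  (∀ T : Triangle C, T ∈ (distTriang C) → T.obj₁ ∈ S → T.obj₃ ∈ S → T.obj₂ ∈ S) ∧
  (∀ (J : Type v) (f : J → C) (c : Cofan f), IsColimit c → (∀ j, f j ∈ S) → c.pt ∈ S)

/-- `Loc ω` : the smallest localizing subcategory containing `ω`. -/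
def Loc (ω : C) : Set C :=
  {X : C | ∀ S : Set C, IsLocalizingSub S → ω ∈ S → X ∈ S}

end Loc

/-- A recollement of triangulated categories. -/
structure Recollement (Y : Type u₁) (D : Type u₂) (X : Type u₃)
    [Category.{v} Y] [Category.{v} D] [Category.{v} X]
    [HasZeroObject Y] [HasZeroObject D] [HasZeroObject X]
    [Preadditive Y] [Preadditive D] [Preadditive X]
    [HasShift Y ℤ] [HasShift D ℤ] [HasShift X ℤ]
    [∀ n : ℤ, (shiftFunctor Y n).Additive] [∀ n : ℤ, (shiftFunctor D n).Additive]
    [∀ n : ℤ, (shiftFunctor X n).Additive]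
    [Pretriangulated Y] [Pretriangulated D] [Pretriangulated X] where
  /-- `i^* : D ⥤ Y` -/
  iStar : D ⥤ Y
  /-- `i_* : Y ⥤ D` -/
  iLow : Y ⥤ D
  /-- `i^! : D ⥤ Y` -/
  iShriek : D ⥤ Y
  /-- `j_! : X ⥤ D` -/
  jShriek : X ⥤ D
  /-- `j^* : D ⥤ X` -/
  jStar : D ⥤ X
  /-- `j_* : X ⥤ D` -/
  jLow : X ⥤ D
  adj₁ : iStar ⊣ iLow
  adj₂ : iLow ⊣ iShriek
  adj₃ : jShriek ⊣ jStar
  adj₄ : jStar ⊣ jLow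
  iLow_full : iLow.Full
  iLow_faithful : iLow.Faithful
  jShriek_full : jShriek.Full
  jShriek_faithful : jShriek.Faithful
  jLow_full : jLow.Full
  jLow_faithful : jLow.Faithful
  jStar_iLow_zero : ∀ y : Y, IsZero (jStar.obj (iLow.obj y))
  iStar_commShift : iStar.CommShift ℤ
  iLow_commShift : iLow.CommShift ℤ
  iShriek_commShift : iShriek.CommShift ℤ
  jShriek_commShift : jShriek.CommShift ℤ
  jStar_commShift : jStar.CommShift ℤ
  jLow_commShift : jLow.CommShift ℤ
  iStar_triangulated : letI := iStar_commShift; iStar.IsTriangulated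
  iLow_triangulated : letI := iLow_commShift; iLow.IsTriangulated
  iShriek_triangulated : letI := iShriek_commShift; iShriek.IsTriangulated
  jShriek_triangulated : letI := jShriek_commShift; jShriek.IsTriangulated
  jStar_triangulated : letI := jStar_commShift; jStar.IsTriangulated
  jLow_triangulated : letI := jLow_commShift; jLow.IsTriangulated

section Helpers

variable {C : Type u} [Category.{v} C] [Preadditive C]

/-- All morphisms from `A` to `B` vanish. -/
def AllZero (A B : C) : Prop := ∀ f : A ⟶ B, f = 0

lemma allZero_of_iso_left {A A' B : C} (e : A ≅ A') (h : AllZero A B) : AllZero A' B := by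
  intro φ
  have h1 : e.hom ≫ φ = 0 := h _
  have : e.inv ≫ e.hom ≫ φ = e.inv ≫ 0 := by rw [h1]
  simpa using this

lemma allZero_of_iso_right {A B B' : C} (e : B ≅ B') (h : AllZero A B) : AllZero A B' := by
  intro φ
  have h1 : φ ≫ e.inv = 0 := h _
  have : (φ ≫ e.inv) ≫ e.hom = 0 ≫ e.hom := by rw [h1]
  simpa using this

lemma allZero_sigma {J : Type v} {fam : J → C} [HasCoproduct fam] {B : C}
    (h : ∀ j, AllZero (fam j) B) : AllZero (∐ fam) B := by
  intro φ
  apply colimit.hom_ext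
  intro j
  simpa using h j.as (Sigma.ι fam j.as ≫ φ)

lemma allZero_biprod_src [HasBinaryBiproducts C] {A B W : C}
    (hA : AllZero A W) (hB : AllZero B W) : AllZero (A ⊞ B) W := by
  intro φ
  apply biprod.hom_ext'
  · rw [hA (biprod.inl ≫ φ), comp_zero]
  · rw [hB (biprod.inr ≫ φ), comp_zero]

lemma allZero_biprod_src_left [HasBinaryBiproducts C] {A B W : C}
    (h : AllZero (A ⊞ B) W) : AllZero A W := by
  intro φ
  have : biprod.inl ≫ biprod.desc φ (0 : B ⟶ W) = φ := biprod.inl_desc _ _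
  rw [← this, h (biprod.desc φ 0), comp_zero]

lemma allZero_biprod_src_right [HasBinaryBiproducts C] {A B W : C}
    (h : AllZero (A ⊞ B) W) : AllZero B W := by
  intro φ
  have : biprod.inr ≫ biprod.desc (0 : A ⟶ W) φ = φ := biprod.inr_desc _ _
  rw [← this, h (biprod.desc 0 φ), comp_zero]

lemma allZero_biprod_tgt [HasBinaryBiproducts C] {A B W : C}
    (hA : AllZero W A) (hB : AllZero W B) : AllZero W (A ⊞ B) := by
  intro φ
  apply biprod.hom_ext
  · rw [hA (φ ≫ biprod.fst), zero_comp]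
  · rw [hB (φ ≫ biprod.snd), zero_comp]

section ShiftHelpers

variable [HasShift C ℤ] [∀ n : ℤ, (shiftFunctor C n).Additive]

lemma allZero_shift {A B : C} (n : ℤ) (h : AllZero A B) : AllZero (A⟦n⟧) (B⟦n⟧) := by
  intro φ
  obtain ⟨ψ, rfl⟩ := (shiftFunctor C n).map_surjective φ
  rw [h ψ, Functor.map_zero]

lemma allZero_unshift {A B : C} (n : ℤ) (h : AllZero (A⟦n⟧) (B⟦n⟧)) : AllZero A B := by
  intro φ
  apply (shiftFunctor C n).map_injective
  rw [h ((shiftFunctor C n).map φ), Functor.map_zero]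

/-- Transfer a hom-vanishing statement along a shift: if all maps `A ⟶ B⟦a⟧` vanish
and `a + n = b`, then all maps `A⟦n⟧ ⟶ B⟦b⟧` vanish. -/
lemma allZero_shift_trans {A B : C} {a n b : ℤ} (hab : a + n = b)
    (h : AllZero A (B⟦a⟧)) : AllZero (A⟦n⟧) (B⟦b⟧) := by
  have h1 : AllZero (A⟦n⟧) ((B⟦a⟧)⟦n⟧) := allZero_shift n h
  exact allZero_of_iso_right (((shiftFunctorAdd' C a n b hab).app B).symm) h1

lemma homShiftZero_iff_allZero (A B : C) (k : ℤ) :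
    homShiftZero A B k ↔ AllZero A (B⟦k⟧) := Iff.rfl

end ShiftHelpers

end Helpers

/-- **Theorem 2.10** (gluing silting objects). -/
theorem gluing_silting_objects
    {Y D X : Type u} [Category.{v} Y] [Category.{v} D] [Category.{v} X]
    [HasZeroObject Y] [HasZeroObject D] [HasZeroObject X]
    [Preadditive Y] [Preadditive D] [Preadditive X]
    [HasShift Y ℤ] [HasShift D ℤ] [HasShift X ℤ]
    [∀ n : ℤ, (shiftFunctor Y n).Additive] [∀ n : ℤ, (shiftFunctor D n).Additive]
    [∀ n : ℤ, (shiftFunctor X n).Additive]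
    [Pretriangulated Y] [Pretriangulated D] [Pretriangulated X]
    [HasCoproducts.{v} Y] [HasCoproducts.{v} D] [HasCoproducts.{v} X]
    [HasBinaryBiproducts D]
    -- `D` is well generated
    (hD : IsWellGenerated D)
    -- `ω` is a partial silting object of `D`
    (ω : D) (hω : IsPartialSilting ω)
    -- the recollement `ω^{⊥ℤ} ⇄ D ⇄ Loc(ω)` induced by `ω`, with `i_*` and `j_!`
    -- identified with the inclusions of `ω^{⊥ℤ}` and `Loc(ω)` via their essential images
    (R : Recollement Y D X)
    (hIm_i : ∀ d : D, (∃ y : Y, Nonempty (R.iLow.obj y ≅ d)) ↔ perpZ ω d)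
    (hIm_j : ∀ d : D, (∃ x : X, Nonempty (R.jShriek.obj x ≅ d)) ↔ d ∈ Loc ω)
    -- `σ` is a silting object of `ω^{⊥ℤ}`
    (σ : Y) (hσ : IsSilting σ)
    -- (1) the class `(i_*σ)^{⊥>0} ∩ (j_!ω)^{⊥>0}` is closed under coproducts in `D`
    (h1 : ClosedUnderCoproducts {Z : D | perpGT (R.iLow.obj σ) Z ∧ perpGT ω Z})
    -- (2) `Hom_D(i_*σ, j_!ω[k]) = 0` for all `k ≥ 2`
    (h2 : ∀ k : ℤ, 2 ≤ k → homShiftZero (R.iLow.obj σ) ω k)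
    -- `σ̃` is the cocone of the canonical map `α : (i_*σ)^{(I)} ⟶ j_!ω[1]`,
    -- where `I = Hom_D(i_*σ, j_!ω[1])`
    (σt : D) (f : ω ⟶ σt)
    (g : σt ⟶ ∐ (fun _ : (R.iLow.obj σ ⟶ ω⟦(1 : ℤ)⟧) => R.iLow.obj σ))
    (hT : Triangle.mk f g (Sigma.desc fun φ => φ) ∈ distTriang D) :
    -- then `σ̃ ⊕ i_*σ` is a silting object of `D`
    IsSilting (σt ⊞ R.iLow.obj σ) := by
  letI := R.iLow_full
  letI := R.iLow_faithful
  letI := R.iLow_commShift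
  haveI : PreservesColimitsOfSize.{v, v} R.iLow := R.adj₂.leftAdjoint_preservesColimits
  set T : Triangle D := Triangle.mk f g (Sigma.desc fun φ => φ) with hTdef
  -- transfer of hom-vanishing through the fully faithful functor `i_*`
  have hFF : ∀ (y y' : Y), AllZero y y' → AllZero (R.iLow.obj y) (R.iLow.obj y') := by
    intro y y' h φ
    obtain ⟨ψ, rfl⟩ := R.iLow.map_surjective φ
    rw [h ψ, R.iLow.map_zero]
  have hFF' : ∀ (y y' : Y), AllZero (R.iLow.obj y) (R.iLow.obj y') → AllZero y y' := by
    intro y y' h φ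
    apply R.iLow.map_injective
    rw [h (R.iLow.map φ), R.iLow.map_zero]
  -- the commutation-with-shift isomorphism for `i_*`
  have isoSh : ∀ (y : Y) (k : ℤ), R.iLow.obj (y⟦k⟧) ≅ (R.iLow.obj y)⟦k⟧ :=
    fun y k => (R.iLow.commShiftIso k).app y
  -- objects in the image of `i_*` are in `ω^{⊥ℤ}`
  have hImZ : ∀ (y : Y) (k : ℤ), AllZero ω ((R.iLow.obj y)⟦k⟧) := by
    intro y k
    exact ((hIm_i (R.iLow.obj y)).mp ⟨y, ⟨Iso.refl _⟩⟩) k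
  -- `i_*` preserves the relevant coproduct
  have isoP : (∐ (fun _ : (R.iLow.obj σ ⟶ ω⟦(1 : ℤ)⟧) => R.iLow.obj σ)) ≅
      R.iLow.obj (∐ (fun _ : (R.iLow.obj σ ⟶ ω⟦(1 : ℤ)⟧) => σ)) :=
    asIso (sigmaComparison R.iLow (fun _ : (R.iLow.obj σ ⟶ ω⟦(1 : ℤ)⟧) => σ))
  -- `σ^{(I)} ∈ σ^{⊥>0}` in `Y`, since `σ` is (partial) silting in `Y`
  have hσco : perpGT σ (∐ (fun _ : (R.iLow.obj σ ⟶ ω⟦(1 : ℤ)⟧) => σ)) :=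
    hσ.1.2 (R.iLow.obj σ ⟶ ω⟦(1 : ℤ)⟧) (fun _ => σ)
      (colimit.cocone _) (colimit.isColimit _) (fun _ => hσ.1.1)
  -- F5 : `Hom(i_*σ, (i_*σ)^{(I)}[k]) = 0` for `k > 0`
  have hIP : ∀ k : ℤ, 0 < k →
      AllZero (R.iLow.obj σ)
        ((∐ (fun _ : (R.iLow.obj σ ⟶ ω⟦(1 : ℤ)⟧) => R.iLow.obj σ))⟦k⟧) := by
    intro k hk
    have ha : AllZero σ ((∐ (fun _ : (R.iLow.obj σ ⟶ ω⟦(1 : ℤ)⟧) => σ))⟦k⟧) := hσco k hk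
    have hb := allZero_of_iso_right (isoSh _ k) (hFF _ _ ha)
    exact allZero_of_iso_right ((shiftFunctor D k).mapIso isoP.symm) hb
  -- F1 : `Hom(i_*σ, i_*σ[k]) = 0` for `k > 0`
  have hII : ∀ k : ℤ, 0 < k → AllZero (R.iLow.obj σ) ((R.iLow.obj σ)⟦k⟧) := by
    intro k hk
    exact allZero_of_iso_right (isoSh σ k) (hFF _ _ (hσ.1.1 k hk))
  -- F2' : `Hom(ω, (i_*σ)^{(I)}[k]) = 0` for all `k`
  have hωP : ∀ k : ℤ,
      AllZero ω ((∐ (fun _ : (R.iLow.obj σ ⟶ ω⟦(1 : ℤ)⟧) => R.iLow.obj σ))⟦k⟧) := by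
    intro k
    exact allZero_of_iso_right ((shiftFunctor D k).mapIso isoP.symm) (hImZ _ k)
  -- D1 : `Hom(i_*σ, σ̃[k]) = 0` for `k > 0`
  have hIσt : ∀ k : ℤ, 0 < k → AllZero (R.iLow.obj σ) (σt⟦k⟧) := by
    intro k hk φ
    have hT' := Triangle.shift_distinguished T hT k
    obtain ⟨e, he⟩ := Triangle.coyoneda_exact₂ _ hT' φ (by
      have hm2 : ((shiftFunctor (Triangle D) k).obj T).mor₂ = k.negOnePow • (T.mor₂⟦k⟧') := rfl
      have hz : (φ : _ ⟶ T.obj₂⟦k⟧) ≫ T.mor₂⟦k⟧' = 0 := hIP k hk _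
      rw [hm2]; exact (Linear.comp_units_smul (φ : _ ⟶ T.obj₂⟦k⟧) k.negOnePow (T.mor₂⟦k⟧')).trans
        ((congrArg (fun x => k.negOnePow • x) hz).trans (smul_zero _)))
    rcases lt_or_ge k 2 with h2' | h2'
    · -- `k = 1` : use that `α` is "surjective" on `Hom(i_*σ, -)`
      have hk1 : k = 1 := by omega
      subst hk1
      have he2 : e = Sigma.ι (fun _ : (R.iLow.obj σ ⟶ ω⟦(1 : ℤ)⟧) => R.iLow.obj σ) e ≫
          T.mor₃ :=
        (Sigma.ι_desc (f := fun _ : (R.iLow.obj σ ⟶ ω⟦(1 : ℤ)⟧) => R.iLow.obj σ)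
          (fun φ => φ) e).symm
      rw [he, he2]
      have hm : ((shiftFunctor (Triangle D) (1 : ℤ)).obj T).mor₁ =
          (1 : ℤ).negOnePow • (T.mor₁⟦(1 : ℤ)⟧') := rfl
      rw [hm]
      have key : T.mor₃ ≫ T.mor₁⟦(1 : ℤ)⟧' = 0 := comp_distTriang_mor_zero₃₁ T hT
      exact (Linear.comp_units_smul _ _ _).trans 
        ((congrArg (fun x : _ ⟶ T.obj₂⟦(1 : ℤ)⟧ => (1 : ℤ).negOnePow • x)
          ((Category.assoc _ _ _).trans ((congrArg (fun y =>
            Sigma.ι (fun _ : (R.iLow.obj σ ⟶ ω⟦(1 : ℤ)⟧) => R.iLow.obj σ) e ≫ y) key).trans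
              comp_zero))).trans (smul_zero _))
    · -- `k ≥ 2` : use hypothesis (2)
      rw [he, h2 k h2' e]; exact zero_comp
  -- D3 : `Hom(σ̃, i_*σ[k]) = 0` for `k > 0`
  have hσtI : ∀ k : ℤ, 0 < k → AllZero σt ((R.iLow.obj σ)⟦k⟧) := by
    intro k hk ψ
    obtain ⟨θ, hθ⟩ := Triangle.yoneda_exact₂ T hT ψ (hImZ σ k (T.mor₁ ≫ ψ))
    have hθ0 : θ = 0 := allZero_sigma (fun _ => hII k hk) θ
    rw [hθ, hθ0]; exact comp_zero
  -- D4 : `Hom(ω, σ̃[k]) = 0` for `k > 0`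
  have hωσt : ∀ k : ℤ, 0 < k → AllZero ω (σt⟦k⟧) := by
    intro k hk φ
    have hT' := Triangle.shift_distinguished T hT k
    obtain ⟨e, he⟩ := Triangle.coyoneda_exact₂ _ hT' φ (by
      have hm2 : ((shiftFunctor (Triangle D) k).obj T).mor₂ = k.negOnePow • (T.mor₂⟦k⟧') := rfl
      have hz : (φ : _ ⟶ T.obj₂⟦k⟧) ≫ T.mor₂⟦k⟧' = 0 := hωP k _
      rw [hm2]; exact (Linear.comp_units_smul (φ : _ ⟶ T.obj₂⟦k⟧) k.negOnePow (T.mor₂⟦k⟧')).trans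
        ((congrArg (fun x => k.negOnePow • x) hz).trans (smul_zero _)))
    rw [he, hω.1 k hk e]; exact zero_comp
  -- D5 : `Hom(σ̃, σ̃[k]) = 0` for `k > 0`
  have hσtσt : ∀ k : ℤ, 0 < k → AllZero σt (σt⟦k⟧) := by
    intro k hk ψ
    obtain ⟨θ, hθ⟩ := Triangle.yoneda_exact₂ T hT ψ (hωσt k hk (T.mor₁ ≫ ψ))
    have hθ0 : θ = 0 := allZero_sigma (fun _ => hIσt k hk) θ
    rw [hθ, hθ0]; exact comp_zero
  -- exactness at `Hom(ω, Z[k])`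
  have hExact1 : ∀ (Z : D) (k : ℤ), AllZero (R.iLow.obj σ) (Z⟦k + 1⟧) →
      AllZero σt (Z⟦k⟧) → AllZero ω (Z⟦k⟧) := by
    intro Z k hι' hσt' e
    have hT2 := inv_rot_of_distTriang T hT
    have hPz : AllZero
        ((∐ (fun _ : (R.iLow.obj σ ⟶ ω⟦(1 : ℤ)⟧) => R.iLow.obj σ))⟦(-1 : ℤ)⟧) (Z⟦k⟧) := by
      have hp : AllZero (∐ (fun _ : (R.iLow.obj σ ⟶ ω⟦(1 : ℤ)⟧) => R.iLow.obj σ)) (Z⟦k + 1⟧) :=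
        allZero_sigma (fun _ => hι')
      exact allZero_shift_trans (by omega) hp
    obtain ⟨h', hh⟩ := Triangle.yoneda_exact₂ _ hT2 e (hPz (T.invRotate.mor₁ ≫ e))
    rw [hh]
    show T.mor₁ ≫ h' = 0
    rw [hσt' h']; exact comp_zero
  -- shift of the biproduct
  have isoBi : ∀ k : ℤ, ((σt ⊞ R.iLow.obj σ)⟦k⟧) ≅ (σt⟦k⟧ ⊞ (R.iLow.obj σ)⟦k⟧) := fun k =>
    haveI := preservesBinaryBiproducts_of_preservesBiproducts (shiftFunctor D k)
    (shiftFunctor D k).mapBiprod σt (R.iLow.obj σ)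
  refine ⟨⟨?_, ?_⟩, ?_⟩
  · -- `σ̃ ⊕ i_*σ ∈ (σ̃ ⊕ i_*σ)^{⊥>0}`
    intro k hk
    have hbt : AllZero σt ((σt ⊞ R.iLow.obj σ)⟦k⟧) :=
      allZero_of_iso_right (isoBi k).symm (allZero_biprod_tgt (hσtσt k hk) (hσtI k hk))
    have hbi : AllZero (R.iLow.obj σ) ((σt ⊞ R.iLow.obj σ)⟦k⟧) :=
      allZero_of_iso_right (isoBi k).symm (allZero_biprod_tgt (hIσt k hk) (hII k hk))
    exact allZero_biprod_src hbt hbi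
  · -- `(σ̃ ⊕ i_*σ)^{⊥>0}` is closed under coproducts
    have hset : ∀ Z : D,
        perpGT (σt ⊞ R.iLow.obj σ) Z ↔ (perpGT (R.iLow.obj σ) Z ∧ perpGT ω Z) := by
      intro Z
      constructor
      · intro h
        have hσtZ : ∀ k : ℤ, 0 < k → AllZero σt (Z⟦k⟧) :=
          fun k hk => allZero_biprod_src_left (h k hk)
        have hιZ : ∀ k : ℤ, 0 < k → AllZero (R.iLow.obj σ) (Z⟦k⟧) :=
          fun k hk => allZero_biprod_src_right (h k hk)
        exact ⟨hιZ, fun k hk => hExact1 Z k (hιZ (k + 1) (by omega)) (hσtZ k hk)⟩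
      · rintro ⟨hιZ, hωZ⟩ k hk
        have hσtZ : AllZero σt (Z⟦k⟧) := by
          intro ψ
          obtain ⟨θ, hθ⟩ := Triangle.yoneda_exact₂ T hT ψ (hωZ k hk (T.mor₁ ≫ ψ))
          have hθ0 : θ = 0 := allZero_sigma (fun _ => hιZ k hk) θ
          rw [hθ, hθ0]; exact comp_zero
        exact allZero_biprod_src hσtZ (hιZ k hk)
    intro J fam c hc hmem
    have hmem' : c.pt ∈ {Z : D | perpGT (R.iLow.obj σ) Z ∧ perpGT ω Z} :=
      h1 J fam c hc (fun j => (hset (fam j)).mp (hmem j))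
    exact (hset c.pt).mpr hmem'
  · -- generation
    intro Z hZ
    have hσtZ : ∀ k : ℤ, AllZero σt (Z⟦k⟧) := fun k => allZero_biprod_src_left (hZ k)
    have hιZ : ∀ k : ℤ, AllZero (R.iLow.obj σ) (Z⟦k⟧) := fun k =>
      allZero_biprod_src_right (hZ k)
    have hωZ : perpZ ω Z := fun k => hExact1 Z k (hιZ (k + 1)) (hσtZ k)
    obtain ⟨y, ⟨ey⟩⟩ := (hIm_i Z).mpr hωZ
    have hσy : perpZ σ y := by
      intro k
      apply hFF' σ (y⟦k⟧)
      have h3 : AllZero (R.iLow.obj σ) ((R.iLow.obj y)⟦k⟧) :=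
        allZero_of_iso_right ((shiftFunctor D k).mapIso ey.symm) (hιZ k)
      exact allZero_of_iso_right (isoSh y k).symm h3
    exact IsZero.of_iso (R.iLow.map_isZero (hσ.2 y hσy)) ey.symm

end Glue
end

section
/- Let D be a well generated triangulated category with induced recollement ω^{⊥ℤ} ⇄ D ⇄ Loc(ω) for a partial silting object ω, and let σ be a silting object of ω^{⊥ℤ}. Assume D, Loc(ω) and ω^{⊥ℤ} satisfy dual Brown representability, and let ρ = σ̃ ⊕ i_*σ be the silting object obtained by gluing (σ̃ the cocone of the canonical map α : (i_*σ)^{(I)} → j_!ω[1], I = Hom_D(i_*σ, j_!ω[1]), under hypotheses (1) (i_*σ)^{⊥>0} ∩ (j_!ω)^{⊥>0} closed under coproducts and (2) Hom_D(i_*σ, j_!ω[k]) = 0 for k ≥ 2). Let (Y′, Y″) = (^{⊥0}(σ^{⊥≥0}), σ^{⊥≥0}) and (X′, X″) = (^{⊥0}(ω^{⊥≥0}), ω^{⊥≥0}) be the co-t-structures associated to σ and ω in ω^{⊥ℤ} and Loc(ω) respectively, and let (D′, D″) be the co-t-structure obtained by gluing them along the recollement. Then the co-t-structure (^{⊥0}(ρ^{⊥≥0}),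 ρ^{⊥≥0}) associated to ρ coincides with (D′, D″). -/
open CategoryTheory Limits Pretriangulated

universe v u u₁ u₂ u₃

namespace Glue

variable {C : Type u} [Category.{v} C] [Preadditive C]

/-- Dual Brown representability: the category has products and every covariant
cohomological functor to abelian groups sending products to products is representable. -/
def DualBrownRepresentability (C : Type u) [Category.{v} C] [Preadditive C]
    [HasZeroObject C] [HasShift C ℤ] [∀ n : ℤ, (shiftFunctor C n).Additive]
    [Pretriangulated C] : Prop :=
  HasProducts.{v} C ∧
  ∀ F : C ⥤ AddCommGrpCat.{v},
    (∀ T : Triangle C, T ∈ (distTriang C) →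
      Function.Exact (⇑(F.map T.mor₁)) (⇑(F.map T.mor₂))) →
    (∀ (J : Type v) (f : J → C) (c : Fan f), IsLimit c → Nonempty (IsLimit (F.mapCone c))) →
    (F ⋙ forget AddCommGrpCat).IsCorepresentable

section MyHelpers

variable {A : Type u₁} {B : Type u₂} [Category.{v} A] [Category.{v} B]
  [Preadditive A] [Preadditive B]

/-- Every morphism `X ⟶ Y` is zero. -/
def homZero (X Y : A) : Prop := ∀ f : X ⟶ Y, f = 0

lemma homZero_iff_right {X Y Y' : A} (e : Y ≅ Y') : homZero X Y ↔ homZero X Y' := by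
  constructor
  · intro h f
    have h1 : f ≫ e.inv = 0 := h _
    have h2 : f = (f ≫ e.inv) ≫ e.hom := by simp
    rw [h2, h1, Limits.zero_comp]
  · intro h f
    have h1 : f ≫ e.hom = 0 := h _
    have h2 : f = (f ≫ e.hom) ≫ e.inv := by simp
    rw [h2, h1, Limits.zero_comp]

lemma homZero_iff_left {X X' Y : A} (e : X ≅ X') : homZero X Y ↔ homZero X' Y := by
  constructor
  · intro h f
    have h1 : e.hom ≫ f = 0 := h _
    have h2 : f = e.inv ≫ (e.hom ≫ f) := by simp
    rw [h2, h1, Limits.comp_zero]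
  · intro h f
    have h1 : e.inv ≫ f = 0 := h _
    have h2 : f = e.hom ≫ (e.inv ≫ f) := by simp
    rw [h2, h1, Limits.comp_zero]

lemma homZero_of_isZero_left {X Y : A} (h : IsZero X) : homZero X Y :=
  fun f => h.eq_of_src f 0

lemma homZero_of_isZero_right {X Y : A} (h : IsZero Y) : homZero X Y :=
  fun f => h.eq_of_tgt f 0

lemma homZero_adj {F : A ⥤ B} {G : B ⥤ A} (adj : F ⊣ G) (X : A) (Y : B) :
    homZero (F.obj X) Y ↔ homZero X (G.obj Y) := by
  constructor
  · intro h g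
    have h1 : (adj.homEquiv X Y).symm g = (adj.homEquiv X Y).symm 0 := by
      rw [h ((adj.homEquiv X Y).symm g), h ((adj.homEquiv X Y).symm 0)]
    exact (adj.homEquiv X Y).symm.injective h1
  · intro h g
    have h1 : adj.homEquiv X Y g = adj.homEquiv X Y 0 := by
      rw [h (adj.homEquiv X Y g), h (adj.homEquiv X Y 0)]
    exact (adj.homEquiv X Y).injective h1

lemma homZero_adj_shift [HasShift A ℤ] [HasShift B ℤ]
    {F : A ⥤ B} {G : B ⥤ A} (adj : F ⊣ G) [G.CommShift ℤ] (X : A) (Z : B) (k : ℤ) :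
    homZero (F.obj X) ((shiftFunctor B k).obj Z) ↔
      homZero X ((shiftFunctor A k).obj (G.obj Z)) :=
  (homZero_adj adj X _).trans (homZero_iff_right ((G.commShiftIso k).app Z))

end MyHelpers

section MyShiftHelpers

variable {C : Type u} [Category.{v} C] [Preadditive C] [HasShift C ℤ]
  [∀ n : ℤ, (shiftFunctor C n).Additive]

lemma homZero_shift_iff {X W W' : C} (k : ℤ) (e : W ≅ W') :
    homZero X ((shiftFunctor C k).obj W) ↔ homZero X ((shiftFunctor C k).obj W') :=
  homZero_iff_right ((shiftFunctor C k).mapIso e)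

lemma perpGE_of_iso {X W W' : C} (e : W ≅ W') (h : perpGE X W) : perpGE X W' :=
  fun k hk => (homZero_shift_iff k e).mp (h k hk)

lemma perpGE_of_isZero {X W : C} (h : IsZero W) : perpGE X W :=
  fun k _ f => ((shiftFunctor C k).map_isZero h).eq_of_tgt f 0

lemma homZero_shift_shift {X Y : C} (k : ℤ) (h : homZero X ((shiftFunctor C (k + 1)).obj Y)) :
    homZero X ((shiftFunctor C (1 : ℤ)).obj ((shiftFunctor C k).obj Y)) :=
  (homZero_iff_right ((shiftFunctorAdd' C k 1 (k + 1) rfl).app Y)).mp h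

lemma homZero_shift_neg_one {X Y : C} (h : homZero X ((shiftFunctor C (1 : ℤ)).obj Y)) :
    homZero ((shiftFunctor C (-1 : ℤ)).obj X) Y := by
  intro u
  have h2 : (shiftFunctorCompIsoId C (-1 : ℤ) 1 (by norm_num)).inv.app X ≫
      (shiftFunctor C (1 : ℤ)).map u = 0 := h _
  apply (shiftFunctor C (1 : ℤ)).map_injective
  rw [Functor.map_zero]
  have h1 : (shiftFunctor C (1 : ℤ)).map u =
      (shiftFunctorCompIsoId C (-1 : ℤ) 1 (by norm_num)).hom.app X ≫
      ((shiftFunctorCompIsoId C (-1 : ℤ) 1 (by norm_num)).inv.app X ≫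
        (shiftFunctor C (1 : ℤ)).map u) := by
    rw [← Category.assoc, Iso.hom_inv_id_app, Category.id_comp]
  rw [h1, h2, Limits.comp_zero]

end MyShiftHelpers

section MyBiprodHelpers

variable {C : Type u} [Category.{v} C] [Preadditive C]

lemma homZero_biprod_iff [HasBinaryBiproducts C] (X₁ X₂ W : C) :
    homZero (X₁ ⊞ X₂) W ↔ homZero X₁ W ∧ homZero X₂ W := by
  constructor
  · intro h
    constructor
    · intro f
      have h0 : biprod.desc f (0 : X₂ ⟶ W) = 0 := h _
      have h1 : f = biprod.inl ≫ biprod.desc f (0 : X₂ ⟶ W) := (biprod.inl_desc _ _).symm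
      rw [h1, h0, Limits.comp_zero]
    · intro f
      have h0 : biprod.desc (0 : X₁ ⟶ W) f = 0 := h _
      have h1 : f = biprod.inr ≫ biprod.desc (0 : X₁ ⟶ W) f := (biprod.inr_desc _ _).symm
      rw [h1, h0, Limits.comp_zero]
  · rintro ⟨h₁, h₂⟩ f
    apply biprod.hom_ext'
    · exact (h₁ _).trans Limits.comp_zero.symm
    · exact (h₂ _).trans Limits.comp_zero.symm

lemma homZero_sigma [HasCoproducts.{v} C] {J : Type v} (f : J → C) (W : C)
    (h : ∀ j, homZero (f j) W) : homZero (∐ f) W := fun u =>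
  Sigma.hom_ext u 0 (fun j => by rw [h j (Sigma.ι f j ≫ u), Limits.comp_zero])

end MyBiprodHelpers

/-- **Theorem 2.14**: the gluing of silting objects is compatible with the gluing of
co-t-structures. -/
theorem glued_silting_co_t_structure
    {Y D X : Type u} [Category.{v} Y] [Category.{v} D] [Category.{v} X]
    [HasZeroObject Y] [HasZeroObject D] [HasZeroObject X]
    [Preadditive Y] [Preadditive D] [Preadditive X]
    [HasShift Y ℤ] [HasShift D ℤ] [HasShift X ℤ]
    [∀ n : ℤ, (shiftFunctor Y n).Additive] [∀ n : ℤ, (shiftFunctor D n).Additive]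
    [∀ n : ℤ, (shiftFunctor X n).Additive]
    [Pretriangulated Y] [Pretriangulated D] [Pretriangulated X]
    [HasCoproducts.{v} Y] [HasCoproducts.{v} D] [HasCoproducts.{v} X]
    [HasBinaryBiproducts D]
    -- `D` is well generated
    (hD : IsWellGenerated D)
    -- `D`, `Loc(ω)` and `ω^{⊥ℤ}` satisfy dual Brown representability
    (hBrY : DualBrownRepresentability Y) (hBrD : DualBrownRepresentability D)
    (hBrX : DualBrownRepresentability X)
    -- `ω` is a partial silting object of `D`
    (ω : D) (hω : IsPartialSilting ω)
    -- the recollement `ω^{⊥ℤ} ⇄ D ⇄ Loc(ω)` induced by `ω`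
    (R : Recollement Y D X)
    (hIm_i : ∀ d : D, (∃ y : Y, Nonempty (R.iLow.obj y ≅ d)) ↔ perpZ ω d)
    (hIm_j : ∀ d : D, (∃ x : X, Nonempty (R.jShriek.obj x ≅ d)) ↔ d ∈ Loc ω)
    -- `ω` viewed as an object of `Loc(ω)`
    (ωX : X) (hωX : Nonempty (R.jShriek.obj ωX ≅ ω))
    -- `σ` is a silting object of `ω^{⊥ℤ}`
    (σ : Y) (hσ : IsSilting σ)
    -- (1) `(i_*σ)^{⊥>0} ∩ (j_!ω)^{⊥>0}` is closed under coproducts in `D`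
    (h1 : ClosedUnderCoproducts {Z : D | perpGT (R.iLow.obj σ) Z ∧ perpGT ω Z})
    -- (2) `Hom_D(i_*σ, j_!ω[k]) = 0` for all `k ≥ 2`
    (h2 : ∀ k : ℤ, 2 ≤ k → homShiftZero (R.iLow.obj σ) ω k)
    -- `σ̃` is the cocone of the canonical map `α : (i_*σ)^{(I)} ⟶ j_!ω[1]`
    (σt : D) (f : ω ⟶ σt)
    (g : σt ⟶ ∐ (fun _ : (R.iLow.obj σ ⟶ ω⟦(1 : ℤ)⟧) => R.iLow.obj σ))
    (hT : Triangle.mk f g (Sigma.desc fun φ => φ) ∈ distTriang D) :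
    -- then, for the glued silting object `ρ = σ̃ ⊕ i_*σ`, the co-t-structure
    -- `(^{⊥0}(ρ^{⊥≥0}), ρ^{⊥≥0})` coincides with the glued co-t-structure `(D′, D″)`:
    ({Z : D | ∀ W : D, perpGE (σt ⊞ R.iLow.obj σ) W → ∀ φ : Z ⟶ W, φ = 0}
        = {Z : D |
            (∀ W : Y, perpGE σ W → ∀ φ : R.iStar.obj Z ⟶ W, φ = 0) ∧
            (∀ W : X, perpGE ωX W → ∀ φ : R.jStar.obj Z ⟶ W, φ = 0)}) ∧
    ({Z : D | perpGE (σt ⊞ R.iLow.obj σ) Z}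
        = {Z : D | perpGE σ (R.iShriek.obj Z) ∧ perpGE ωX (R.jStar.obj Z)}) := by
  haveI := R.iLow_full; haveI := R.iLow_faithful
  haveI := R.jShriek_full; haveI := R.jShriek_faithful
  haveI := R.jLow_full; haveI := R.jLow_faithful
  letI := R.iStar_commShift; letI := R.iLow_commShift; letI := R.iShriek_commShift
  letI := R.jShriek_commShift; letI := R.jStar_commShift; letI := R.jLow_commShift
  haveI : R.iStar.IsTriangulated := R.iStar_triangulated
  haveI : R.jStar.IsTriangulated := R.jStar_triangulated
  obtain ⟨eω⟩ := hωX
  -- adjunction + shift transfers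
  have hIσ : ∀ (Z : D) (k : ℤ),
      homZero (R.iLow.obj σ) ((shiftFunctor D k).obj Z) ↔
        homZero σ ((shiftFunctor Y k).obj (R.iShriek.obj Z)) :=
    fun Z k => homZero_adj_shift R.adj₂ σ Z k
  have hJω : ∀ (Z : D) (k : ℤ),
      homZero ω ((shiftFunctor D k).obj Z) ↔
        homZero ωX ((shiftFunctor X k).obj (R.jStar.obj Z)) :=
    fun Z k => (homZero_iff_left eω).symm.trans (homZero_adj_shift R.adj₃ ωX Z k)
  -- the key characterization : Z ∈ ρ^{⊥≥0} iff i^!Z ∈ σ^{⊥≥0} and j^*Z ∈ ωX^{⊥≥0}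
  have key : ∀ Z : D, perpGE (σt ⊞ R.iLow.obj σ) Z ↔
      (perpGE σ (R.iShriek.obj Z) ∧ perpGE ωX (R.jStar.obj Z)) := by
    intro Z
    constructor
    · intro hρ
      have hcomp : ∀ k : ℤ, 0 ≤ k →
          homZero σt ((shiftFunctor D k).obj Z) ∧
            homZero (R.iLow.obj σ) ((shiftFunctor D k).obj Z) :=
        fun k hk => (homZero_biprod_iff σt (R.iLow.obj σ) _).mp (hρ k hk)
      have hω0 : ∀ k : ℤ, 0 ≤ k → homZero ω ((shiftFunctor D k).obj Z) := by
        intro k hk φ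
        have hf0 : (Triangle.mk f g (Sigma.desc fun φ' => φ')).invRotate.mor₁ ≫ φ = 0 :=
          homZero_shift_neg_one (homZero_sigma _ _
            (fun _ => homZero_shift_shift k ((hcomp (k + 1) (by omega)).2))) _
        obtain ⟨h, hh⟩ := Triangle.yoneda_exact₂ _ (inv_rot_of_distTriang _ hT) φ hf0
        rw [hh, (hcomp k hk).1 h]; exact Limits.comp_zero
      exact ⟨fun k hk => (hIσ Z k).mp ((hcomp k hk).2),
        fun k hk => (hJω Z k).mp (hω0 k hk)⟩
    · rintro ⟨hY, hX⟩ k hk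
      have hiσ : homZero (R.iLow.obj σ) ((shiftFunctor D k).obj Z) :=
        (hIσ Z k).mpr (hY k hk)
      have hωZ : homZero ω ((shiftFunctor D k).obj Z) := (hJω Z k).mpr (hX k hk)
      have hσtZ : homZero σt ((shiftFunctor D k).obj Z) := by
        intro φ
        obtain ⟨h, hh⟩ := Triangle.yoneda_exact₂ _ hT φ (hωZ _)
        have h0 : h = 0 := homZero_sigma _ _ (fun _ => hiσ) h
        rw [hh, h0]; exact Limits.comp_zero
      exact (homZero_biprod_iff σt (R.iLow.obj σ) _).mpr ⟨hσtZ, hiσ⟩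
  refine ⟨Set.ext fun Z => ?_, Set.ext fun Z => key Z⟩
  simp only [Set.mem_setOf_eq]
  constructor
  · intro hZ
    constructor
    · intro W hW
      have hmem : perpGE (σt ⊞ R.iLow.obj σ) (R.iLow.obj W) := by
        refine (key _).mpr ⟨?_, ?_⟩
        · exact perpGE_of_iso (asIso (R.adj₂.unit.app W)) hW
        · exact perpGE_of_isZero (R.jStar_iLow_zero W)
      exact fun φ => (homZero_adj R.adj₁ Z W).mpr (hZ _ hmem) φ
    · intro W hW
      have hmem : perpGE (σt ⊞ R.iLow.obj σ) (R.jLow.obj W) := by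
        refine (key _).mpr ⟨?_, ?_⟩
        · intro k hk
          have h0 : homZero (R.jStar.obj (R.iLow.obj σ)) ((shiftFunctor X k).obj W) :=
            homZero_of_isZero_left (R.jStar_iLow_zero σ)
          have h1 : homZero (R.iLow.obj σ) (R.jLow.obj ((shiftFunctor X k).obj W)) :=
            (homZero_adj R.adj₄ (R.iLow.obj σ) ((shiftFunctor X k).obj W)).mp h0
          have h2 : homZero (R.iLow.obj σ) ((shiftFunctor D k).obj (R.jLow.obj W)) :=
            (homZero_iff_right ((R.jLow.commShiftIso k).app W)).mp h1
          exact (homZero_adj_shift R.adj₂ σ (R.jLow.obj W) k).mp h2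
        · exact perpGE_of_iso (asIso (R.adj₄.counit.app W)).symm hW
      exact fun φ => (homZero_adj R.adj₄ Z W).mpr (hZ _ hmem) φ
  · rintro ⟨hi, hj⟩ W hW φ
    obtain ⟨hWσ, hWω⟩ := (key W).mp hW
    obtain ⟨C0, u, w, hTr⟩ := Pretriangulated.distinguished_cocone_triangle (R.adj₃.counit.app Z)
    have hm : (Triangle.mk (R.adj₃.counit.app Z) u w).mor₁ ≫ φ = 0 := by
      have hz : homZero (R.jShriek.obj (R.jStar.obj Z)) W :=
        (homZero_adj R.adj₃ (R.jStar.obj Z) W).mpr (hj _ hWω)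
      exact hz _
    obtain ⟨γ, hγ⟩ := Triangle.yoneda_exact₂ _ hTr φ hm
    have hiso : IsIso (R.jStar.map (R.adj₃.counit.app Z)) := by
      haveI : IsIso (R.adj₃.unit.app (R.jStar.obj Z)) := inferInstance
      haveI : IsIso (𝟙 (R.jStar.obj Z)) := inferInstance
      exact IsIso.of_isIso_fac_left (R.adj₃.right_triangle_components Z)
    have hzero : IsZero (R.jStar.obj C0) :=
      Triangle.isZero₃_of_isIso₁ _ (R.jStar.map_distinguished _ hTr) hiso
    have hperpZ : perpZ ω C0 := fun k =>
      (hJω C0 k).mpr (homZero_of_isZero_right ((shiftFunctor X k).map_isZero hzero))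
    obtain ⟨y, ⟨ey⟩⟩ := (hIm_i C0).mpr hperpZ
    have hz1 : IsZero (R.iStar.obj (R.jShriek.obj (R.jStar.obj Z))) := by
      rw [IsZero.iff_id_eq_zero]
      have hz2 : homZero (R.jShriek.obj (R.jStar.obj Z))
          (R.iLow.obj (R.iStar.obj (R.jShriek.obj (R.jStar.obj Z)))) :=
        (homZero_adj R.adj₃ _ _).mpr (homZero_of_isZero_right (R.jStar_iLow_zero _))
      exact (homZero_adj R.adj₁ _ _).mpr hz2 _
    have hiso2 : IsIso (R.iStar.map u) :=
      (Triangle.isZero₁_iff_isIso₂ _ (R.iStar.map_distinguished _ hTr)).mp hz1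
    have e4 : R.iStar.obj Z ≅ y :=
      asIso (R.iStar.map u) ≪≫ (R.iStar.mapIso ey).symm ≪≫ asIso (R.adj₁.counit.app y)
    have hC0 : homZero C0 W :=
      (homZero_iff_left ey).mp ((homZero_adj R.adj₂ y W).mpr
        ((homZero_iff_left e4).mp (hi _ hWσ)))
    rw [hγ, hC0 γ]; exact Limits.comp_zero

end Glue
end

section
/- Let σ₁, σ₂ be objects of a triangulated category D such that Hom_D(σ₁, σ₁[k]) = 0 and Hom_D(σ₂, σ₂[k]) = 0 for all k > 0, and assume (A1) Hom_D(σ₁, σ₂[k]) = 0 for all k ≥ 0 and (A2) Hom_D(σ₂, σ₁[k]) = 0 for all k ≥ 2. Given a morphism α : σ₂ → σ₁[1], let σ̃ be defined by a triangle σ₁ → σ̃ → σ₂ --α--> σ₁[1]. Then Hom_D(σ̃, σ̃[k]) = 0 for all k > 0 if and only if the homomorphism φ : Hom_D(σ₂, σ₂) ⊕ Hom_D(σ₁[1], σ₁[1]) → Hom_D(σ₂, σ₁[1]) defined by φ(f, g) = α ∘ f + g ∘ α is surjective. -/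
open CategoryTheory Limits Pretriangulated

universe v u u₁ u₂ u₃

namespace Glue

variable {C : Type u} [Category.{v} C] [Preadditive C]

/-- **Proposition 2.3**: the cocone `σ̃` of `α : σ₂ ⟶ σ₁[1]` has no positive
self-extensions if and only if the map `φ(f, g) = α ∘ f + g ∘ α` is surjective. -/
theorem cocone_self_orthogonal_iff
    {D : Type u} [Category.{v} D] [Preadditive D] [HasZeroObject D] [HasShift D ℤ]
    [∀ n : ℤ, (shiftFunctor D n).Additive] [Pretriangulated D]
    (σ₁ σ₂ : D)
    (hσ₁ : ∀ k : ℤ, 0 < k → homShiftZero σ₁ σ₁ k)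
    (hσ₂ : ∀ k : ℤ, 0 < k → homShiftZero σ₂ σ₂ k)
    (hA1 : ∀ k : ℤ, 0 ≤ k → homShiftZero σ₁ σ₂ k)
    (hA2 : ∀ k : ℤ, 2 ≤ k → homShiftZero σ₂ σ₁ k)
    (α : σ₂ ⟶ σ₁⟦(1 : ℤ)⟧)
    (σt : D) (a : σ₁ ⟶ σt) (b : σt ⟶ σ₂)
    (hT : Triangle.mk a b α ∈ distTriang D) :
    (∀ k : ℤ, 0 < k → homShiftZero σt σt k) ↔
      Function.Surjective
        (fun p : (σ₂ ⟶ σ₂) × (σ₁⟦(1 : ℤ)⟧ ⟶ σ₁⟦(1 : ℤ)⟧) =>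
          (p.1 ≫ α + α ≫ p.2 : σ₂ ⟶ σ₁⟦(1 : ℤ)⟧)) := by
  set T : Triangle D := Triangle.mk a b α with hTdef
  have L1 : ∀ k : ℤ, 0 < k → ∀ f : σ₁ ⟶ σt⟦k⟧, f = 0 := by
    intro k hk f
    have hTk := Triangle.shift_distinguished T hT k
    have hf : f ≫ ((CategoryTheory.shiftFunctor (Triangle D) k).obj T).mor₂ = 0 := by
      show f ≫ (k.negOnePow • (shiftFunctor D k).map T.mor₂) = 0
      have : f ≫ (shiftFunctor D k).map T.mor₂ = 0 := hA1 k hk.le _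
      exact (Linear.comp_units_smul _ _ _).trans ((congrArg _ this).trans (smul_zero _))
    obtain ⟨g, hg⟩ := Triangle.coyoneda_exact₂ _ hTk f hf
    have hg0 : g = 0 := hσ₁ k hk g
    rw [hg, hg0, zero_comp]; rfl
  have L2 : ∀ k : ℤ, 2 ≤ k → ∀ f : σ₂ ⟶ σt⟦k⟧, f = 0 := by
    intro k hk f
    have hTk := Triangle.shift_distinguished T hT k
    have hf : f ≫ ((CategoryTheory.shiftFunctor (Triangle D) k).obj T).mor₂ = 0 := by
      show f ≫ (k.negOnePow • (shiftFunctor D k).map T.mor₂) = 0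
      have : f ≫ (shiftFunctor D k).map T.mor₂ = 0 := hσ₂ k (by omega) _
      exact (Linear.comp_units_smul _ _ _).trans ((congrArg _ this).trans (smul_zero _))
    obtain ⟨g, hg⟩ := Triangle.coyoneda_exact₂ _ hTk f hf
    have hg0 : g = 0 := hA2 k hk g
    rw [hg, hg0, zero_comp]; rfl
  have L3 : ∀ k : ℤ, 2 ≤ k → ∀ f : σt ⟶ σt⟦k⟧, f = 0 := by
    intro k hk f
    obtain ⟨g, hg⟩ := Triangle.yoneda_exact₂ T hT f (L1 k (by omega) _)
    rw [hg, L2 k hk g]; exact comp_zero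
  have hba : b ≫ α = 0 := comp_distTriang_mor_zero₂₃ T hT
  have hαa : α ≫ (shiftFunctor D (1:ℤ)).map a = 0 := comp_distTriang_mor_zero₃₁ T hT
  constructor
  · -- forward direction
    intro hvan β
    have h0 : b ≫ (β ≫ (shiftFunctor D (1:ℤ)).map a) = 0 := hvan 1 one_pos _
    obtain ⟨g₀, hg₀⟩ :=
      Triangle.yoneda_exact₃ T hT (β ≫ (shiftFunctor D (1:ℤ)).map a) h0
    obtain ⟨g₀', rfl⟩ := (shiftFunctor D (1:ℤ)).map_surjective g₀
    have hg1 : (β ≫ (shiftFunctor D (1:ℤ)).map a : σ₂ ⟶ σt⟦(1:ℤ)⟧)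
        = α ≫ (shiftFunctor D (1:ℤ)).map (show σ₁ ⟶ σt from g₀') := hg₀
    have hb0 : (show σ₁ ⟶ σt from g₀') ≫ b = 0 := by
      have h1 : (((show σ₁ ⟶ σt from g₀') ≫ b) ≫ (shiftFunctorZero D ℤ).inv.app σ₂ :
          σ₁ ⟶ σ₂⟦(0:ℤ)⟧) = 0 := hA1 0 le_rfl _
      rw [← cancel_mono ((shiftFunctorZero D ℤ).inv.app σ₂), zero_comp]
      exact h1
    obtain ⟨e, he⟩ := Triangle.coyoneda_exact₂ T hT (show σ₁ ⟶ σt from g₀') hb0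
    have he1 : (show σ₁ ⟶ σt from g₀') = (show σ₁ ⟶ σ₁ from e) ≫ a := he
    have key : (β - α ≫ (shiftFunctor D (1:ℤ)).map (show σ₁ ⟶ σ₁ from e))
        ≫ (shiftFunctor D (1:ℤ)).map a = 0 := by
      rw [Preadditive.sub_comp, Category.assoc, ← Functor.map_comp, ← he1, ← hg1, sub_self]
    obtain ⟨f, hf⟩ := Triangle.coyoneda_exact₁ T hT
      (β - α ≫ (shiftFunctor D (1:ℤ)).map (show σ₁ ⟶ σ₁ from e)) key
    have hf1 : β - α ≫ (shiftFunctor D (1:ℤ)).map (show σ₁ ⟶ σ₁ from e)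
        = (show σ₂ ⟶ σ₂ from f) ≫ α := hf
    refine ⟨(show σ₂ ⟶ σ₂ from f, (shiftFunctor D (1:ℤ)).map (show σ₁ ⟶ σ₁ from e)), ?_⟩
    simp only
    rw [← hf1]
    abel
  · -- backward direction
    intro hsurj k hk f
    rcases lt_or_ge k 2 with h2 | h2
    · have hk1 : k = 1 := by omega
      subst hk1
      obtain ⟨h, hh⟩ := Triangle.yoneda_exact₂ T hT f (L1 1 one_pos _)
      have hT1 := Triangle.shift_distinguished T hT 1
      have hh2 : h ≫ ((CategoryTheory.shiftFunctor (Triangle D) (1:ℤ)).obj T).mor₂ = 0 := by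
        show h ≫ ((1:ℤ).negOnePow • (shiftFunctor D (1:ℤ)).map T.mor₂) = 0
        have : h ≫ (shiftFunctor D (1:ℤ)).map T.mor₂ = 0 := hσ₂ 1 one_pos _
        exact (Linear.comp_units_smul _ _ _).trans ((congrArg _ this).trans (smul_zero _))
      obtain ⟨β, hβ⟩ := Triangle.coyoneda_exact₂ _ hT1 h hh2
      have hβ' : h = (((1:ℤ).negOnePow • β : σ₂ ⟶ σ₁⟦(1:ℤ)⟧))
          ≫ (shiftFunctor D (1:ℤ)).map a := by
        rw [hβ]
        show β ≫ ((1:ℤ).negOnePow • (shiftFunctor D (1:ℤ)).map a) = _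
        exact (Linear.comp_units_smul _ _ _).trans (Linear.units_smul_comp _ _ _).symm
      obtain ⟨⟨p₁, p₂⟩, hp⟩ := hsurj (((1:ℤ).negOnePow • β : σ₂ ⟶ σ₁⟦(1:ℤ)⟧))
      simp only at hp
      rw [hh, hβ', ← hp]
      show b ≫ ((p₁ ≫ α + α ≫ p₂) ≫ (shiftFunctor D (1:ℤ)).map a) = 0
      simp only [Preadditive.add_comp, Preadditive.comp_add, Category.assoc, hαa,
        comp_zero, reassoc_of% hba, zero_comp, add_zero, zero_add]
    · exact L3 k h2 f


end Glue
end

section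
/- Let σ₁, σ₂ be objects of a triangulated category D such that Hom_D(σ₁, σ₁[k]) = 0 and Hom_D(σ₂, σ₂[k]) = 0 for all k > 0, and assume (A1) Hom_D(σ₁, σ₂[k]) = 0 for all k ≥ 0 and (A2) Hom_D(σ₂, σ₁[k]) = 0 for all k ≥ 2. Given a morphism α : σ₂ → σ₁[1], let σ̃ be defined by a triangle σ₁ → σ̃ → σ₂ --α--> σ₁[1]. Then: (1) Hom_D(σ̃ ⊕ σ₂, (σ̃ ⊕ σ₂)[k]) = 0 for all k > 0 if and only if α is left universal; (2) Hom_D(σ̃ ⊕ σ₁, (σ̃ ⊕ σ₁)[k]) = 0 for all k > 0 if and only if α is right universal. -/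
open CategoryTheory Limits Pretriangulated

universe v u u₁ u₂ u₃

namespace Glue

variable {C : Type u} [Category.{v} C] [Preadditive C]

lemma shift_cofactor {D : Type u} [Category.{v} D] [Preadditive D] [HasZeroObject D]
    [HasShift D ℤ] [∀ n : ℤ, (shiftFunctor D n).Additive] [Pretriangulated D]
    {σ₁ σ₂ σt : D} {a : σ₁ ⟶ σt} {b : σt ⟶ σ₂} {α : σ₂ ⟶ σ₁⟦(1:ℤ)⟧}
    (hT : Triangle.mk a b α ∈ distTriang D) (k : ℤ) {X : D}
    (f : X ⟶ σt⟦k⟧) (hf : f ≫ b⟦k⟧' = 0) : ∃ g : X ⟶ σ₁⟦k⟧, f = g ≫ a⟦k⟧' := by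
  obtain ⟨g, hg⟩ := Pretriangulated.Triangle.coyoneda_exact₂ _
    (Pretriangulated.Triangle.shift_distinguished _ hT k) f
    (by dsimp [Triangle.shiftFunctor]; show f ≫ (k.negOnePow • b⟦k⟧') = 0; rw [Linear.comp_units_smul, hf, smul_zero])
  refine ⟨k.negOnePow • g, ?_⟩
  rw [hg]
  dsimp [Triangle.shiftFunctor]
  show g ≫ (k.negOnePow • a⟦k⟧') = (k.negOnePow • g) ≫ a⟦k⟧'
  exact (Linear.comp_units_smul ..).trans (Linear.units_smul_comp ..).symm

lemma biprod_shift_hom_zero {D : Type u} [Category.{v} D] [Preadditive D]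
    [HasShift D ℤ] [∀ n : ℤ, (shiftFunctor D n).Additive] [HasBinaryBiproducts D]
    {A B : D} (k : ℤ)
    (hAA : ∀ f : A ⟶ A⟦k⟧, f = 0) (hAB : ∀ f : A ⟶ B⟦k⟧, f = 0)
    (hBA : ∀ f : B ⟶ A⟦k⟧, f = 0) (hBB : ∀ f : B ⟶ B⟦k⟧, f = 0)
    (h : A ⊞ B ⟶ (A ⊞ B)⟦k⟧) : h = 0 := by
  have key : ∀ {X : D}, (∀ f : X ⟶ A⟦k⟧, f = 0) → (∀ f : X ⟶ B⟦k⟧, f = 0) →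
      ∀ u : X ⟶ (A ⊞ B)⟦k⟧, u = 0 := by
    intro X h1 h2 u
    have hu : u = u ≫ ((biprod.fst ≫ biprod.inl + biprod.snd ≫ biprod.inr :
        A ⊞ B ⟶ A ⊞ B))⟦k⟧' := by
      rw [biprod.total, CategoryTheory.Functor.map_id, Category.comp_id]
    rw [hu, Functor.map_add, Functor.map_comp, Functor.map_comp, Preadditive.comp_add,
      ← Category.assoc, ← Category.assoc, h1 (u ≫ (biprod.fst)⟦k⟧'),
      h2 (u ≫ (biprod.snd)⟦k⟧'), zero_comp, zero_comp, add_zero]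
  apply biprod.hom_ext'
  · rw [comp_zero]; exact key hAA hAB _
  · rw [comp_zero]; exact key hBA hBB _

/-- **Proposition 2.5**: `σ̃ ⊕ σ₂` (resp. `σ̃ ⊕ σ₁`) has no positive self-extensions
if and only if `α` is left (resp. right) universal. -/
theorem cocone_biprod_self_orthogonal_iff_universal
    {D : Type u} [Category.{v} D] [Preadditive D] [HasZeroObject D] [HasShift D ℤ]
    [∀ n : ℤ, (shiftFunctor D n).Additive] [Pretriangulated D]
    [HasBinaryBiproducts D]
    (σ₁ σ₂ : D)
    (hσ₁ : ∀ k : ℤ, 0 < k → homShiftZero σ₁ σ₁ k)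
    (hσ₂ : ∀ k : ℤ, 0 < k → homShiftZero σ₂ σ₂ k)
    (hA1 : ∀ k : ℤ, 0 ≤ k → homShiftZero σ₁ σ₂ k)
    (hA2 : ∀ k : ℤ, 2 ≤ k → homShiftZero σ₂ σ₁ k)
    (α : σ₂ ⟶ σ₁⟦(1 : ℤ)⟧)
    (σt : D) (a : σ₁ ⟶ σt) (b : σt ⟶ σ₂)
    (hT : Triangle.mk a b α ∈ distTriang D) :
    ((∀ k : ℤ, 0 < k → homShiftZero (σt ⊞ σ₂) (σt ⊞ σ₂) k) ↔
      Function.Surjective (fun g : σ₂ ⟶ σ₂ => g ≫ α)) ∧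
    ((∀ k : ℤ, 0 < k → homShiftZero (σt ⊞ σ₁) (σt ⊞ σ₁) k) ↔
      Function.Surjective (fun g : σ₁⟦(1 : ℤ)⟧ ⟶ σ₁⟦(1 : ℤ)⟧ => α ≫ g)) := by
  have hz31 : α ≫ a⟦(1:ℤ)⟧' = 0 := comp_distTriang_mor_zero₃₁ _ hT
  have hz23 : b ≫ α = 0 := comp_distTriang_mor_zero₂₃ _ hT
  have zt2 : ∀ k : ℤ, 0 < k → ∀ f : σt ⟶ σ₂⟦k⟧, f = 0 := by
    intro k hk f
    obtain ⟨g, hg⟩ := Pretriangulated.Triangle.yoneda_exact₂ _ hT f (hA1 k hk.le _)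
    rw [hg]; show b ≫ g = 0; rw [hσ₂ k hk g]; exact comp_zero
  constructor
  · constructor
    · intro H f
      have h0 : f ≫ a⟦(1:ℤ)⟧' = 0 := by
        have hb : (biprod.snd ≫ (f ≫ a⟦(1:ℤ)⟧') ≫
            (biprod.inl : σt ⟶ σt ⊞ σ₂)⟦(1:ℤ)⟧' : σt ⊞ σ₂ ⟶ (σt ⊞ σ₂)⟦(1:ℤ)⟧) = 0 :=
          H 1 one_pos _
        have h2 := congrArg
          (fun u : σt ⊞ σ₂ ⟶ (σt ⊞ σ₂)⟦(1:ℤ)⟧ =>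
            biprod.inr ≫ u ≫ (biprod.fst : σt ⊞ σ₂ ⟶ σt)⟦(1:ℤ)⟧') hb
        simpa [← Functor.map_comp] using h2
      obtain ⟨g, hg⟩ := Pretriangulated.Triangle.coyoneda_exact₃ _
        (rot_of_distTriang _ hT) f
        (by show f ≫ (-(a⟦(1:ℤ)⟧')) = 0; rw [Preadditive.comp_neg, h0, neg_zero])
      exact ⟨g, hg.symm⟩
    · intro hu k hk
      have key : ∀ g : σ₂ ⟶ σ₁⟦k⟧, g ≫ a⟦k⟧' = 0 := by
        rcases (by omega : k = 1 ∨ 2 ≤ k) with rfl | h2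
        · intro g
          obtain ⟨u, hu'⟩ := hu g
          rw [← hu', Category.assoc, hz31, comp_zero]
        · intro g; rw [hA2 k h2 g, zero_comp]
      have z2t : ∀ f : σ₂ ⟶ σt⟦k⟧, f = 0 := by
        intro f
        obtain ⟨g, hg⟩ := shift_cofactor hT k f (hσ₂ k hk _)
        rw [hg, key g]
      have ztt : ∀ f : σt ⟶ σt⟦k⟧, f = 0 := by
        intro f
        obtain ⟨g, hg⟩ := shift_cofactor hT k f (zt2 k hk _)
        obtain ⟨h, hh⟩ := Pretriangulated.Triangle.yoneda_exact₂ _ hT g (hσ₁ k hk _)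
        have hk' := key h; rw [hg, hh]; exact (Category.assoc ..).trans ((congrArg (fun x => b ≫ x) hk').trans comp_zero)
      intro h
      exact biprod_shift_hom_zero k ztt (zt2 k hk) z2t (hσ₂ k hk) h
  · constructor
    · intro H f
      have h0 : b ≫ f = 0 := by
        have hb : (biprod.fst ≫ (b ≫ f) ≫
            (biprod.inr : σ₁ ⟶ σt ⊞ σ₁)⟦(1:ℤ)⟧' : σt ⊞ σ₁ ⟶ (σt ⊞ σ₁)⟦(1:ℤ)⟧) = 0 :=
          H 1 one_pos _
        have h2 := congrArg
          (fun u : σt ⊞ σ₁ ⟶ (σt ⊞ σ₁)⟦(1:ℤ)⟧ =>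
            biprod.inl ≫ u ≫ (biprod.snd : σt ⊞ σ₁ ⟶ σ₁)⟦(1:ℤ)⟧') hb
        simpa [← Functor.map_comp] using h2
      obtain ⟨g, hg⟩ := Pretriangulated.Triangle.yoneda_exact₃ _ hT f h0
      exact ⟨g, hg.symm⟩
    · intro hu k hk
      have zt1 : ∀ f : σt ⟶ σ₁⟦k⟧, f = 0 := by
        intro f
        obtain ⟨h, hh⟩ := Pretriangulated.Triangle.yoneda_exact₂ _ hT f (hσ₁ k hk _)
        rcases (by omega : k = 1 ∨ 2 ≤ k) with rfl | h2
        · obtain ⟨g, hg⟩ := hu h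
          rw [hh, ← hg]
          show b ≫ α ≫ g = 0
          rw [← Category.assoc, hz23, zero_comp]
        · rw [hh]; show b ≫ h = 0; rw [hA2 k h2 h]; exact comp_zero
      have z1t : ∀ f : σ₁ ⟶ σt⟦k⟧, f = 0 := by
        intro f
        obtain ⟨g, hg⟩ := shift_cofactor hT k f (hA1 k hk.le _)
        rw [hg, hσ₁ k hk g, zero_comp]
      have ztt : ∀ f : σt ⟶ σt⟦k⟧, f = 0 := by
        intro f
        obtain ⟨g, hg⟩ := shift_cofactor hT k f (zt2 k hk _)
        rw [hg, zt1 g, zero_comp]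
      intro h
      exact biprod_shift_hom_zero k ztt zt1 z1t (hσ₁ k hk) h

end Glue
end

section
/- Let R be a ring and let σ be a 2-term complex in K^b(Proj R) (a complex of projective right R-modules concentrated in degrees −1 and 0) with T = H^0(σ). Then, in the unbounded derived category D(R), the class σ^{⊥>0} = {Y ∈ D(R) : Hom_{D(R)}(σ, Y[i]) = 0 for all i > 0} equals the class of complexes X with H^0(X) ∈ D_σ and H^i(X) ∈ Y_σ for all i ≥ 1. -/
open CategoryTheory Limits Pretriangulated

universe u

namespace Glue

noncomputable section

variable (R : Type u) [Ring R]

instance hasDerivedCategoryModule : HasDerivedCategory (ModuleCat.{u} R) :=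
  HasDerivedCategory.standard _

variable {R}

/-- A 2-term complex of projectives: a cochain complex of projective modules
concentrated in degrees `-1` and `0`. -/
def TwoTermProj (σ : CochainComplex (ModuleCat.{u} R) ℤ) : Prop :=
  (∀ n : ℤ, Projective (σ.X n)) ∧ (∀ n : ℤ, n ≠ -1 → n ≠ 0 → IsZero (σ.X n))

/-- The class `D_σ` of modules `M` such that `Hom_R(σ, M)` is surjective. -/
def Dclass (σ : CochainComplex (ModuleCat.{u} R) ℤ) : Set (ModuleCat.{u} R) :=
  {M | Function.Surjective (fun φ : σ.X 0 ⟶ M => σ.d (-1) 0 ≫ φ)}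

/-- The class `Y_σ` of modules `M` such that `Hom_R(σ, M)` is bijective. -/
def Yclass (σ : CochainComplex (ModuleCat.{u} R) ℤ) : Set (ModuleCat.{u} R) :=
  {M | Function.Bijective (fun φ : σ.X 0 ⟶ M => σ.d (-1) 0 ≫ φ)}

/-- The injectivity class. -/
def Iclass (σ : CochainComplex (ModuleCat.{u} R) ℤ) : Set (ModuleCat.{u} R) :=
  {M | Function.Injective (fun φ : σ.X 0 ⟶ M => σ.d (-1) 0 ≫ φ)}

variable {σ : CochainComplex (ModuleCat.{u} R) ℤ}

lemma mem_Yclass_iff {M : ModuleCat.{u} R} :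
    M ∈ Yclass σ ↔ M ∈ Iclass σ ∧ M ∈ Dclass σ := by
  constructor
  · exact fun h => ⟨h.1, h.2⟩
  · exact fun h => ⟨h.1, h.2⟩

lemma Dclass_of_iso {M N : ModuleCat.{u} R} (e : M ≅ N) (hM : M ∈ Dclass σ) :
    N ∈ Dclass σ := by
  intro ψ
  obtain ⟨φ, hφ⟩ := hM (ψ ≫ e.inv)
  exact ⟨φ ≫ e.hom, by
    dsimp only at hφ ⊢
    rw [← Category.assoc, hφ, Category.assoc, e.inv_hom_id, Category.comp_id]⟩

lemma Iclass_of_iso {M N : ModuleCat.{u} R} (e : M ≅ N) (hM : M ∈ Iclass σ) :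
    N ∈ Iclass σ := by
  intro φ₁ φ₂ h
  dsimp only at h
  have : σ.d (-1) 0 ≫ (φ₁ ≫ e.inv) = σ.d (-1) 0 ≫ (φ₂ ≫ e.inv) := by
    rw [← Category.assoc, ← Category.assoc, h]
  have h2 := hM this
  rw [← Category.comp_id φ₁, ← Category.comp_id φ₂, ← e.inv_hom_id,
    ← Category.assoc, ← Category.assoc, h2]

lemma Dclass_iff_of_iso {M N : ModuleCat.{u} R} (e : M ≅ N) :
    M ∈ Dclass σ ↔ N ∈ Dclass σ :=
  ⟨Dclass_of_iso e, Dclass_of_iso e.symm⟩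

lemma Iclass_iff_of_iso {M N : ModuleCat.{u} R} (e : M ≅ N) :
    M ∈ Iclass σ ↔ N ∈ Iclass σ :=
  ⟨Iclass_of_iso e, Iclass_of_iso e.symm⟩

lemma Yclass_iff_of_iso {M N : ModuleCat.{u} R} (e : M ≅ N) :
    M ∈ Yclass σ ↔ N ∈ Yclass σ := by
  rw [mem_Yclass_iff, mem_Yclass_iff, Dclass_iff_of_iso e, Iclass_iff_of_iso e]

lemma mem_Iclass_of_isZero {M : ModuleCat.{u} R} (h : IsZero M) : M ∈ Iclass σ :=
  fun φ₁ φ₂ _ => h.eq_of_tgt φ₁ φ₂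

lemma mem_Dclass_of_isZero {M : ModuleCat.{u} R} (h : IsZero M) : M ∈ Dclass σ :=
  fun ψ => ⟨0, h.eq_of_tgt _ _⟩

section
open HomologicalComplex
variable {R : Type u} [Ring R] {σ C : CochainComplex (ModuleCat.{u} R) ℤ}

lemma d_zero_of_twoTerm_from_zero (hσ : TwoTermProj σ) : σ.d 0 1 = 0 :=
  (hσ.2 1 (by norm_num) (by norm_num)).eq_of_tgt _ _

lemma d_zero_of_twoTerm_to_neg_one (hσ : TwoTermProj σ) : σ.d (-2) (-1) = 0 :=
  (hσ.2 (-2) (by norm_num) (by norm_num)).eq_of_src _ _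

/-- Construction of a morphism `σ ⟶ C` from its two components. -/
def twoMap (hσ : TwoTermProj σ) (f0 : σ.X 0 ⟶ C.X 0) (fm : σ.X (-1) ⟶ C.X (-1))
    (hcomm : fm ≫ C.d (-1) 0 = σ.d (-1) 0 ≫ f0) (hf0 : f0 ≫ C.d 0 1 = 0) : σ ⟶ C where
  f i :=
    if h : i = 0 then (σ.XIsoOfEq h).hom ≫ f0 ≫ (C.XIsoOfEq h).inv
    else if h' : i = -1 then (σ.XIsoOfEq h').hom ≫ fm ≫ (C.XIsoOfEq h').inv
    else 0
  comm' i j hij := by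
    simp only [ComplexShape.up_Rel] at hij
    by_cases h0 : i = 0
    · subst h0
      obtain rfl : j = 1 := by omega
      rw [dif_pos rfl, dif_neg (by norm_num : ¬ (1 : ℤ) = 0),
        dif_neg (by norm_num : ¬ (1 : ℤ) = -1)]
      simp [hf0, d_zero_of_twoTerm_from_zero hσ]
    · by_cases h1 : i = -1
      · subst h1
        obtain rfl : j = 0 := by omega
        rw [dif_neg (by norm_num : ¬ (-1 : ℤ) = 0), dif_pos rfl, dif_pos rfl]
        simp [hcomm]
      · by_cases h2 : i = -2
        · subst h2
          obtain rfl : j = -1 := by omega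
          rw [dif_neg (by norm_num : ¬ (-2 : ℤ) = 0),
            dif_neg (by norm_num : ¬ (-2 : ℤ) = -1),
            dif_neg (by norm_num : ¬ (-1 : ℤ) = 0), dif_pos rfl]
          simp [d_zero_of_twoTerm_to_neg_one hσ]
        · rw [dif_neg h0, dif_neg h1, dif_neg (by omega : ¬ (j = 0)),
            dif_neg (by omega : ¬ (j = -1))]
          simp

@[simp] lemma twoMap_f_zero (hσ : TwoTermProj σ) (f0 : σ.X 0 ⟶ C.X 0)
    (fm : σ.X (-1) ⟶ C.X (-1)) (hcomm) (hf0) :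
    (twoMap hσ f0 fm hcomm hf0).f 0 = f0 := by
  simp [twoMap]

@[simp] lemma twoMap_f_neg_one (hσ : TwoTermProj σ) (f0 : σ.X 0 ⟶ C.X 0)
    (fm : σ.X (-1) ⟶ C.X (-1)) (hcomm) (hf0) :
    (twoMap hσ f0 fm hcomm hf0).f (-1) = fm := by
  dsimp only [twoMap]
  rw [dif_neg (by norm_num : ¬ (-1 : ℤ) = 0), dif_pos rfl]
  simp

/-- Construction of a nullhomotopy of a morphism `σ ⟶ C` from two components. -/
def twoNullHomotopy (hσ : TwoTermProj σ) (f : σ ⟶ C)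
    (h0 : σ.X 0 ⟶ C.X (-1)) (h1 : σ.X (-1) ⟶ C.X (-2))
    (hc0 : f.f 0 = h0 ≫ C.d (-1) 0)
    (hc1 : f.f (-1) = σ.d (-1) 0 ≫ h0 + h1 ≫ C.d (-2) (-1)) :
    Homotopy f 0 where
  hom i j :=
    if h : i = 0 ∧ j = -1 then (σ.XIsoOfEq h.1).hom ≫ h0 ≫ (C.XIsoOfEq h.2).inv
    else if h' : i = -1 ∧ j = -2 then (σ.XIsoOfEq h'.1).hom ≫ h1 ≫ (C.XIsoOfEq h'.2).inv
    else 0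
  zero i j hij := by
    simp only [ComplexShape.up_Rel] at hij
    rw [dif_neg (by omega : ¬ (i = 0 ∧ j = -1)), dif_neg (by omega : ¬ (i = -1 ∧ j = -2))]
  comm i := by
    by_cases hi0 : i = 0
    · subst hi0
      rw [dNext_eq _ (by simp : (ComplexShape.up ℤ).Rel 0 1),
        prevD_eq _ (by simp : (ComplexShape.up ℤ).Rel (-1) 0)]
      rw [dif_neg (by omega : ¬ ((1 : ℤ) = 0 ∧ (0 : ℤ) = -1)),
        dif_neg (by omega : ¬ ((1 : ℤ) = -1 ∧ (0 : ℤ) = -2)),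
        dif_pos (⟨rfl, rfl⟩ : (0 : ℤ) = 0 ∧ (-1 : ℤ) = -1)]
      simp [hc0]
    · by_cases hi1 : i = -1
      · subst hi1
        rw [dNext_eq _ (by simp : (ComplexShape.up ℤ).Rel (-1) 0),
          prevD_eq _ (by simp : (ComplexShape.up ℤ).Rel (-2) (-1))]
        rw [dif_pos (⟨rfl, rfl⟩ : (0 : ℤ) = 0 ∧ (-1 : ℤ) = -1),
          dif_neg (by omega : ¬ ((-1 : ℤ) = 0 ∧ (-2 : ℤ) = -1)),
          dif_pos (⟨rfl, rfl⟩ : (-1 : ℤ) = -1 ∧ (-2 : ℤ) = -2)]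
        simp [hc1]
      · exact (hσ.2 i (by omega) (by omega)).eq_of_src _ _
end

section
open HomologicalComplex
variable {R : Type u} [Ring R] {σ : CochainComplex (ModuleCat.{u} R) ℤ}
variable (C : CochainComplex (ModuleCat.{u} R) ℤ)

lemma ofNullHomotopy (hσ : TwoTermProj σ) (f : σ ⟶ C) (hty : Homotopy f 0) :
    ∃ (h0 : σ.X 0 ⟶ C.X (-1)) (h1 : σ.X (-1) ⟶ C.X (-2)),
      f.f 0 = h0 ≫ C.d (-1) 0 ∧
      f.f (-1) = σ.d (-1) 0 ≫ h0 + h1 ≫ C.d (-2) (-1) := by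
  refine ⟨hty.hom 0 (-1), hty.hom (-1) (-2), ?_, ?_⟩
  · have := hty.comm 0
    rw [dNext_eq _ (by simp : (ComplexShape.up ℤ).Rel 0 1),
      prevD_eq _ (by simp : (ComplexShape.up ℤ).Rel (-1) 0),
      d_zero_of_twoTerm_from_zero hσ] at this
    simpa using this
  · have := hty.comm (-1)
    rw [dNext_eq _ (by simp : (ComplexShape.up ℤ).Rel (-1) 0),
      prevD_eq _ (by simp : (ComplexShape.up ℤ).Rel (-2) (-1))] at this
    simpa using this

lemma cycles_homology_exact (i j : ℤ) (hij : (ComplexShape.up ℤ).prev j = i) :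
    (ShortComplex.mk (C.toCycles i j) (C.homologyπ j) (C.toCycles_comp_homologyπ i j)).Exact :=
  ShortComplex.exact_of_g_is_cokernel _ (C.homologyIsCokernel i j hij)

/-- **Core computation**: all morphisms `σ ⟶ C` are nullhomotopic iff
`H^0(C)` is in the injectivity class and `H^{-1}(C)` in the surjectivity class. -/
lemma core_iff (hσ : TwoTermProj σ) :
    (∀ f : σ ⟶ C, Nonempty (Homotopy f 0)) ↔
      (C.homology 0 ∈ Iclass σ ∧ C.homology (-1) ∈ Dclass σ) := by
  haveI hP0 : Projective (σ.X 0) := hσ.1 0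
  haveI hPm : Projective (σ.X (-1)) := hσ.1 (-1)
  constructor
  · intro hnull
    constructor
    · -- injectivity on H^0
      intro φ₁ φ₂ hφ
      dsimp only at hφ
      rw [← sub_eq_zero]
      set φ := φ₁ - φ₂ with hdefφ
      have hφ0 : σ.d (-1) 0 ≫ φ = 0 := by
        rw [hdefφ, Preadditive.comp_sub, hφ, sub_self]
      set u : σ.X 0 ⟶ C.cycles 0 := Projective.factorThru φ (C.homologyπ 0) with hu
      have hu' : u ≫ C.homologyπ 0 = φ := Projective.factorThru_comp _ _
      have h1 : (σ.d (-1) 0 ≫ u) ≫ C.homologyπ 0 = 0 := by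
        rw [Category.assoc, hu', hφ0]
      have hE := cycles_homology_exact C (-1) 0 (by simp)
      set v := hE.liftFromProjective (σ.d (-1) 0 ≫ u) h1 with hvdef
      have hv : v ≫ C.toCycles (-1) 0 = σ.d (-1) 0 ≫ u :=
        hE.liftFromProjective_comp _ _
      have hcomm : v ≫ C.d (-1) 0 = σ.d (-1) 0 ≫ (u ≫ C.iCycles 0) := by
        rw [← C.toCycles_i (-1) 0, ← Category.assoc, hv, Category.assoc]
      have hf0 : (u ≫ C.iCycles 0) ≫ C.d 0 1 = 0 := by
        rw [Category.assoc, C.iCycles_d, comp_zero]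
      obtain ⟨hty⟩ := hnull (twoMap hσ (u ≫ C.iCycles 0) v hcomm hf0)
      obtain ⟨h0, h1', hc0, _⟩ := ofNullHomotopy C hσ _ hty
      rw [twoMap_f_zero] at hc0
      have hu2 : u = h0 ≫ C.toCycles (-1) 0 := by
        rw [← cancel_mono (C.iCycles 0), Category.assoc, C.toCycles_i, ← hc0]
      rw [← hu', hu2, Category.assoc, C.toCycles_comp_homologyπ, comp_zero]
    · -- surjectivity on H^{-1}
      intro β
      set b : σ.X (-1) ⟶ C.cycles (-1) := Projective.factorThru β (C.homologyπ (-1)) with hb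
      have hb' : b ≫ C.homologyπ (-1) = β := Projective.factorThru_comp _ _
      have hcomm : (b ≫ C.iCycles (-1)) ≫ C.d (-1) 0 = σ.d (-1) 0 ≫ (0 : σ.X 0 ⟶ C.X 0) := by
        rw [Category.assoc, C.iCycles_d, comp_zero, comp_zero]
      have hf0 : (0 : σ.X 0 ⟶ C.X 0) ≫ C.d 0 1 = 0 := zero_comp
      obtain ⟨hty⟩ := hnull (twoMap hσ 0 (b ≫ C.iCycles (-1)) hcomm hf0)
      obtain ⟨h0, h1, hc0, hc1⟩ := ofNullHomotopy C hσ _ hty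
      rw [twoMap_f_zero] at hc0
      rw [twoMap_f_neg_one] at hc1
      have hh0 : h0 ≫ C.d (-1) 0 = 0 := hc0.symm
      set tc : σ.X 0 ⟶ C.cycles (-1) := C.liftCycles h0 0 (by simp) hh0 with htc
      have htc' : tc ≫ C.iCycles (-1) = h0 := C.liftCycles_i _ _ _ _
      have hbeq : b = σ.d (-1) 0 ≫ tc + h1 ≫ C.toCycles (-2) (-1) := by
        rw [← cancel_mono (C.iCycles (-1)), Preadditive.add_comp,
          Category.assoc, Category.assoc, htc', C.toCycles_i, ← hc1]
      refine ⟨tc ≫ C.homologyπ (-1), ?_⟩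
      dsimp only
      rw [← hb', hbeq, Preadditive.add_comp, Category.assoc, Category.assoc,
        C.toCycles_comp_homologyπ, comp_zero, add_zero]
  · rintro ⟨hinj, hsurj⟩ f
    have hf01 : f.f 0 ≫ C.d 0 1 = 0 := by
      rw [f.comm 0 1, d_zero_of_twoTerm_from_zero hσ, zero_comp]
    set z0 : σ.X 0 ⟶ C.cycles 0 := C.liftCycles (f.f 0) 1 (by simp) hf01 with hz0
    have hz0i : z0 ≫ C.iCycles 0 = f.f 0 := C.liftCycles_i _ _ _ _
    have hstep1 : σ.d (-1) 0 ≫ z0 = f.f (-1) ≫ C.toCycles (-1) 0 := by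
      rw [← cancel_mono (C.iCycles 0), Category.assoc, Category.assoc, hz0i,
        C.toCycles_i, f.comm (-1) 0]
    have hclass : σ.d (-1) 0 ≫ (z0 ≫ C.homologyπ 0) = 0 := by
      rw [← Category.assoc, hstep1, Category.assoc, C.toCycles_comp_homologyπ, comp_zero]
    have hz0π : z0 ≫ C.homologyπ 0 = 0 := by
      apply hinj
      dsimp only
      rw [hclass, comp_zero]
    have hE0 := cycles_homology_exact C (-1) 0 (by simp)
    set h0' := hE0.liftFromProjective z0 hz0π with hh0'def
    have hh0' : h0' ≫ C.toCycles (-1) 0 = z0 := hE0.liftFromProjective_comp _ _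
    have hh0d : h0' ≫ C.d (-1) 0 = f.f 0 := by
      rw [← C.toCycles_i (-1) 0, ← Category.assoc, hh0', hz0i]
    set g : σ.X (-1) ⟶ C.X (-1) := f.f (-1) - σ.d (-1) 0 ≫ h0' with hgdef
    have hg : g ≫ C.d (-1) 0 = 0 := by
      rw [hgdef, Preadditive.sub_comp, f.comm (-1) 0, Category.assoc, hh0d, sub_self]
    set zg : σ.X (-1) ⟶ C.cycles (-1) := C.liftCycles g 0 (by simp) hg with hzg
    have hzgi : zg ≫ C.iCycles (-1) = g := C.liftCycles_i _ _ _ _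
    obtain ⟨ψ, hψ⟩ := hsurj (zg ≫ C.homologyπ (-1))
    dsimp only at hψ
    set ψ' : σ.X 0 ⟶ C.cycles (-1) := Projective.factorThru ψ (C.homologyπ (-1)) with hψ'def
    have hψ' : ψ' ≫ C.homologyπ (-1) = ψ := Projective.factorThru_comp _ _
    have hwπ : (zg - σ.d (-1) 0 ≫ ψ') ≫ C.homologyπ (-1) = 0 := by
      rw [Preadditive.sub_comp, Category.assoc, hψ', hψ, sub_self]
    have hEm := cycles_homology_exact C (-2) (-1) (by simp)
    set hm1 := hEm.liftFromProjective _ hwπ with hm1def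
    have hhm1 : hm1 ≫ C.toCycles (-2) (-1) = zg - σ.d (-1) 0 ≫ ψ' :=
      hEm.liftFromProjective_comp _ _
    have hc0 : f.f 0 = (h0' + ψ' ≫ C.iCycles (-1)) ≫ C.d (-1) 0 := by
      rw [Preadditive.add_comp, Category.assoc, C.iCycles_d, comp_zero, add_zero, hh0d]
    have hc1 : f.f (-1) =
        σ.d (-1) 0 ≫ (h0' + ψ' ≫ C.iCycles (-1)) + hm1 ≫ C.d (-2) (-1) := by
      rw [← C.toCycles_i (-2) (-1), ← Category.assoc, hhm1, Preadditive.comp_add,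
        Preadditive.sub_comp, hzgi, Category.assoc, hgdef]
      abel
    exact ⟨twoNullHomotopy hσ f _ hm1 hc0 hc1⟩
end

section

lemma forall_eq_zero_iff_of_iso {D : Type*} [Category D] [Limits.HasZeroMorphisms D]
    {X A B : D} (α : A ≅ B) :
    (∀ f : X ⟶ A, f = 0) ↔ (∀ g : X ⟶ B, g = 0) := by
  constructor
  · intro h g
    rw [← Category.comp_id g, ← α.inv_hom_id, ← Category.assoc, h (g ≫ α.inv), zero_comp]
  · intro h f
    rw [← Category.comp_id f, ← α.hom_inv_id, ← Category.assoc, h (f ≫ α.hom), zero_comp]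

/-- Bijectivity of the localization map on Hom when `Hom(X, -)` inverts `W`. -/
lemma loc_hom_bijective {C D : Type*} [Category C] [Category D] (L : C ⥤ D)
    (W : MorphismProperty C) [L.IsLocalization W] [W.HasLeftCalculusOfFractions]
    (X Y : C)
    (hX : ∀ ⦃A B : C⦄ (s : A ⟶ B), W s → Function.Bijective (fun g : X ⟶ A => g ≫ s)) :
    Function.Bijective (fun f : X ⟶ Y => L.map f) := by
  constructor
  · intro f₁ f₂ h
    dsimp only at h
    rw [MorphismProperty.map_eq_iff_postcomp L W] at h
    obtain ⟨Z, s, hs, fac⟩ := h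
    exact (hX s hs).1 fac
  · intro f
    obtain ⟨φ, rfl⟩ := Localization.exists_leftFraction L W f
    obtain ⟨g, hg⟩ := (hX φ.s φ.hs).2 φ.f
    dsimp only at hg
    refine ⟨g, ?_⟩
    haveI : IsIso (L.map φ.s) := Localization.inverts L W φ.s φ.hs
    rw [← cancel_mono (L.map φ.s),
      MorphismProperty.LeftFraction.map_comp_map_s φ L (Localization.inverts L W),
      ← L.map_comp, hg]

variable {R : Type u} [Ring R] {σ : CochainComplex (ModuleCat.{u} R) ℤ}


lemma homotopyCategory_hom_zero_iff (hσ : TwoTermProj σ)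
    (C : CochainComplex (ModuleCat.{u} R) ℤ) :
    (∀ g : (HomotopyCategory.quotient (ModuleCat.{u} R) (ComplexShape.up ℤ)).obj σ ⟶ (HomotopyCategory.quotient (ModuleCat.{u} R) (ComplexShape.up ℤ)).obj C, g = 0) ↔
      (C.homology 0 ∈ Iclass σ ∧ C.homology (-1) ∈ Dclass σ) := by
  rw [← core_iff C hσ]
  constructor
  · intro h f
    exact ⟨HomotopyCategory.homotopyOfEq f 0 (by rw [h ((HomotopyCategory.quotient (ModuleCat.{u} R) (ComplexShape.up ℤ)).map f), Functor.map_zero])⟩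
  · intro h g
    obtain ⟨f, rfl⟩ := (HomotopyCategory.quotient (ModuleCat.{u} R) (ComplexShape.up ℤ)).map_surjective g
    rw [← Functor.map_zero (HomotopyCategory.quotient (ModuleCat.{u} R) (ComplexShape.up ℤ)) σ C]
    exact HomotopyCategory.eq_of_homotopy _ _ (h f).some

lemma vanish_acyclic (hσ : TwoTermProj σ)
    (M : HomotopyCategory (ModuleCat.{u} R) (ComplexShape.up ℤ))
    (hM : HomotopyCategory.subcategoryAcyclic (ModuleCat.{u} R) M) :
    ∀ g : (HomotopyCategory.quotient (ModuleCat.{u} R) (ComplexShape.up ℤ)).obj σ ⟶ M, g = 0 := by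
  obtain ⟨Cc⟩ := M
  change HomotopyCategory.subcategoryAcyclic _ ((HomotopyCategory.quotient _ _).obj Cc) at hM
  rw [HomotopyCategory.mem_subcategoryAcyclic_iff] at hM
  have hzero : ∀ n : ℤ, IsZero (Cc.homology n) := fun n =>
    (hM n).of_iso ((HomotopyCategory.homologyFunctorFactors (ModuleCat.{u} R)
      (ComplexShape.up ℤ) n).app Cc).symm
  intro g
  exact (homotopyCategory_hom_zero_iff hσ Cc).mpr
    ⟨mem_Iclass_of_isZero (hzero 0), mem_Dclass_of_isZero (hzero (-1))⟩ g

lemma postcomp_bij (hσ : TwoTermProj σ)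
    {A B : HomotopyCategory (ModuleCat.{u} R) (ComplexShape.up ℤ)} (s : A ⟶ B)
    (hs : (HomotopyCategory.subcategoryAcyclic (ModuleCat.{u} R)).trW s) :
    Function.Bijective (fun g : (HomotopyCategory.quotient (ModuleCat.{u} R) (ComplexShape.up ℤ)).obj σ ⟶ A => g ≫ s) := by
  obtain ⟨Z, g, h, hT, hZ⟩ := hs
  constructor
  · intro f₁ f₂ hf
    dsimp only at hf
    rw [← sub_eq_zero]
    have h5 : (f₁ - f₂) ≫ s = 0 := by rw [Preadditive.sub_comp, hf, sub_self]
    obtain ⟨w, hw⟩ := Pretriangulated.Triangle.coyoneda_exact₂ _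
      (inv_rot_of_distTriang _ hT) (f₁ - f₂) h5
    rw [hw, vanish_acyclic hσ _
      ((HomotopyCategory.subcategoryAcyclic (ModuleCat.{u} R)).le_shift (-1) Z hZ) w]
    exact zero_comp
  · intro y
    obtain ⟨f, hf⟩ := Pretriangulated.Triangle.coyoneda_exact₂ _ hT y
      (vanish_acyclic hσ Z hZ (y ≫ g))
    exact ⟨f, hf.symm⟩

end

section
variable {R : Type u} [Ring R] {σ : CochainComplex (ModuleCat.{u} R) ℤ}

lemma Qh_map_bijective (hσ : TwoTermProj σ)
    (Y : HomotopyCategory (ModuleCat.{u} R) (ComplexShape.up ℤ)) :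
    Function.Bijective (fun f :
        (HomotopyCategory.quotient (ModuleCat.{u} R) (ComplexShape.up ℤ)).obj σ ⟶ Y =>
      DerivedCategory.Qh.map f) :=
  loc_hom_bijective DerivedCategory.Qh (HomotopyCategory.subcategoryAcyclic (ModuleCat.{u} R)).trW
    _ Y (fun _ _ s hs => postcomp_bij hσ s hs)

lemma derived_hom_zero_iff (hσ : TwoTermProj σ) (Cc : CochainComplex (ModuleCat.{u} R) ℤ) :
    (∀ f : DerivedCategory.Q.obj σ ⟶ DerivedCategory.Q.obj Cc, f = 0) ↔
      (Cc.homology 0 ∈ Iclass σ ∧ Cc.homology (-1) ∈ Dclass σ) := by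
  rw [← homotopyCategory_hom_zero_iff hσ Cc]
  have e := (DerivedCategory.quotientCompQhIso (ModuleCat.{u} R)).app σ
  have eC := (DerivedCategory.quotientCompQhIso (ModuleCat.{u} R)).app Cc
  constructor
  · intro hyp h
    apply (Qh_map_bijective hσ _).1
    dsimp only
    rw [Functor.map_zero]
    have : DerivedCategory.Qh.map h =
        e.hom ≫ (e.inv ≫ DerivedCategory.Qh.map h ≫ eC.hom) ≫ eC.inv := by
      simp
    rw [this, hyp (e.inv ≫ DerivedCategory.Qh.map h ≫ eC.hom), zero_comp, comp_zero]
  · intro hyp f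
    obtain ⟨h, hh⟩ := (Qh_map_bijective hσ _).2 (e.hom ≫ f ≫ eC.inv)
    dsimp only at hh
    have : f = e.inv ≫ DerivedCategory.Qh.map h ≫ eC.hom := by
      rw [hh]; simp
    rw [this, hyp h, Functor.map_zero, zero_comp, comp_zero]
end

/-- **Proposition 1.23**: for a 2-term complex of projectives `σ`, the class `σ^{⊥>0}`
in the derived category `D(R)` consists of the complexes `Z` with `H^0(Z) ∈ D_σ` and
`H^i(Z) ∈ Y_σ` for all `i ≥ 1`. -/
theorem perpGT_twoTerm_eq
    (σ : CochainComplex (ModuleCat.{u} R) ℤ) (hσ : TwoTermProj σ)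
    (T : ModuleCat.{u} R) (hT : Nonempty (σ.homology 0 ≅ T)) :
    {Z : DerivedCategory (ModuleCat.{u} R) |
        ∀ i : ℤ, 0 < i → ∀ f : DerivedCategory.Q.obj σ ⟶ Z⟦i⟧, f = 0}
      = {Z : DerivedCategory (ModuleCat.{u} R) |
          (DerivedCategory.homologyFunctor (ModuleCat.{u} R) 0).obj Z ∈ Dclass σ ∧
          ∀ i : ℤ, 1 ≤ i →
            (DerivedCategory.homologyFunctor (ModuleCat.{u} R) i).obj Z ∈ Yclass σ} := by
  ext Z
  simp only [Set.mem_setOf_eq]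
  haveI : (DerivedCategory.Q (C := ModuleCat.{u} R)).EssSurj :=
    Localization.essSurj _ (HomologicalComplex.quasiIso _ _)
  obtain ⟨K, ⟨eZ⟩⟩ : ∃ K, Nonempty (DerivedCategory.Q.obj K ≅ Z) :=
    ⟨_, ⟨DerivedCategory.Q.objObjPreimageIso Z⟩⟩
  have hL : (∀ i : ℤ, 0 < i → ∀ f : DerivedCategory.Q.obj σ ⟶ Z⟦i⟧, f = 0) ↔
      ∀ i : ℤ, 0 < i → (K.homology i ∈ Iclass σ ∧ K.homology (i - 1) ∈ Dclass σ) := by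
    apply forall_congr'
    intro i
    apply imp_congr_right
    intro hi
    have α : DerivedCategory.Q.obj (K⟦i⟧) ≅ Z⟦i⟧ :=
      (DerivedCategory.Q.commShiftIso i).app K ≪≫
        (shiftFunctor (DerivedCategory (ModuleCat.{u} R)) i).mapIso eZ
    rw [← forall_eq_zero_iff_of_iso α, derived_hom_zero_iff hσ (K⟦i⟧)]
    have β0 : (K⟦i⟧).homology 0 ≅ K.homology i :=
      (CochainComplex.ShiftSequence.shiftIso (ModuleCat.{u} R) i 0 i (add_zero i)).app K
    have βm : (K⟦i⟧).homology (-1) ≅ K.homology (i - 1) :=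
      (CochainComplex.ShiftSequence.shiftIso (ModuleCat.{u} R) i (-1) (i - 1)
        (by omega)).app K
    rw [Iclass_iff_of_iso β0, Dclass_iff_of_iso βm]
  have γ : ∀ j : ℤ,
      (DerivedCategory.homologyFunctor (ModuleCat.{u} R) j).obj Z ≅ K.homology j :=
    fun j => (DerivedCategory.homologyFunctor (ModuleCat.{u} R) j).mapIso eZ.symm ≪≫
      (DerivedCategory.homologyFunctorFactors (ModuleCat.{u} R) j).app K
  have hR : ((DerivedCategory.homologyFunctor (ModuleCat.{u} R) 0).obj Z ∈ Dclass σ ∧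
      ∀ i : ℤ, 1 ≤ i →
        (DerivedCategory.homologyFunctor (ModuleCat.{u} R) i).obj Z ∈ Yclass σ) ↔
      (K.homology 0 ∈ Dclass σ ∧ ∀ i : ℤ, 1 ≤ i → K.homology i ∈ Yclass σ) :=
    and_congr (Dclass_iff_of_iso (γ 0))
      (forall_congr' fun i => imp_congr_right fun _ => Yclass_iff_of_iso (γ i))
  rw [hL, hR]
  constructor
  · intro h
    constructor
    · have := (h 1 one_pos).2
      rw [show (1 : ℤ) - 1 = 0 by norm_num] at this
      exact this
    · intro i hi
      rw [mem_Yclass_iff]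
      refine ⟨(h i (by omega)).1, ?_⟩
      have := (h (i + 1) (by omega)).2
      rw [show i + 1 - 1 = i by omega] at this
      exact this
  · rintro ⟨h0, h1⟩ i hi
    refine ⟨(mem_Yclass_iff.mp (h1 i (by omega))).1, ?_⟩
    by_cases hi1 : i = 1
    · subst hi1
      rw [show (1 : ℤ) - 1 = 0 by norm_num]
      exact h0
    · exact (mem_Yclass_iff.mp (h1 (i - 1) (by omega))).2

end

end Glue
end

section
/- Let D be a triangulated category. (1) If A → B → C ⊕ D --α--> A[1] is a triangle in D and Hom_D(D, A[1]) = 0, then B ≅ B′ ⊕ D, where B′ is the cocone of the restriction α′ of α to C (i.e. B′ fits into a triangle A → B′ → C --α′--> A[1]). (2) Dually, if A --α--> B ⊕ C → D → A[1] is a triangle in D and Hom_D(A, C) = 0, then D ≅ D′ ⊕ C, where D′ is the cone of the map α′ : A → B induced by α. -/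
open CategoryTheory Limits Pretriangulated

universe v u u₁ u₂ u₃

namespace Glue

variable {C : Type u} [Category.{v} C] [Preadditive C]

section Lemma48Aux

open Category ZeroObject

variable {D : Type u} [Category.{v} D] [Preadditive D] [HasZeroObject D] [HasShift D ℤ]
  [∀ n : ℤ, (shiftFunctor D n).Additive] [Pretriangulated D] [HasBinaryBiproducts D]

/-- The binary biproduct identifies with the `Bool`-indexed product. -/
noncomputable def prodBoolIso (X : Bool → D) [HasProduct X] :
    (X true ⊞ X false) ≅ ∏ᶜ X where
  hom := Pi.lift (fun b => match b with
    | true => biprod.fst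
    | false => biprod.snd)
  inv := biprod.lift (Pi.π X true) (Pi.π X false)
  hom_inv_id := by apply biprod.hom_ext <;> simp
  inv_hom_id := by
    apply limit.hom_ext
    rintro ⟨(_ | _)⟩ <;> simp

/-- The binary direct sum of two distinguished triangles is distinguished. -/
lemma biprodTriangle_distinguished (T₁ T₂ : Triangle D)
    (h₁ : T₁ ∈ distTriang D) (h₂ : T₂ ∈ distTriang D) :
    Triangle.mk (biprod.map T₁.mor₁ T₂.mor₁) (biprod.map T₁.mor₂ T₂.mor₂)
      (biprod.desc (T₁.mor₃ ≫ (biprod.inl : T₁.obj₁ ⟶ T₁.obj₁ ⊞ T₂.obj₁)⟦(1 : ℤ)⟧')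
        (T₂.mor₃ ≫ (biprod.inr : T₂.obj₁ ⟶ T₁.obj₁ ⊞ T₂.obj₁)⟦(1 : ℤ)⟧')) ∈ distTriang D := by
  let Tb : Bool → Triangle D := fun b => bif b then T₁ else T₂
  refine isomorphic_distinguished _ (productTriangle_distinguished Tb ?_) _ ?_
  · rintro (_ | _)
    exacts [h₂, h₁]
  · refine Triangle.isoMk _ _ (prodBoolIso (fun b => (Tb b).obj₁))
      (prodBoolIso (fun b => (Tb b).obj₂)) (prodBoolIso (fun b => (Tb b).obj₃)) ?_ ?_ ?_
    · apply limit.hom_ext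
      rintro ⟨(_ | _)⟩ <;> simp only [prodBoolIso, Tb, Triangle.mk, cond, productTriangle] <;> simp
    · apply limit.hom_ext
      rintro ⟨(_ | _)⟩ <;> simp only [prodBoolIso, Tb, Triangle.mk, cond, productTriangle] <;> simp
    · dsimp only [productTriangle, Triangle.mk]
      rw [← cancel_mono (piComparison (shiftFunctor D (1 : ℤ)) (fun b => (Tb b).obj₁)),
        assoc, assoc, assoc, IsIso.inv_hom_id, comp_id]
      apply limit.hom_ext
      rintro ⟨(_ | _)⟩ <;>
        apply biprod.hom_ext' <;>
          simp [prodBoolIso, Tb, ← Functor.map_comp]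

/-- The triangle `0 ⟶ Z = Z ⟶ 0⟦1⟧` is distinguished. -/
lemma zeroIdTriangle_distinguished (Z : D) :
    Triangle.mk (0 : (0 : D) ⟶ Z) (𝟙 Z) (0 : Z ⟶ (0 : D)⟦(1 : ℤ)⟧) ∈ distTriang D := by
  refine isomorphic_distinguished _ (binaryBiproductTriangle_distinguished (0 : D) Z) _ ?_
  refine Triangle.isoMk _ _ (Iso.refl _)
    ⟨biprod.inr, biprod.snd, by dsimp only [Triangle.mk]; exact biprod.inr_snd, ?_⟩ (Iso.refl _) ?_
      (by simp [Triangle.mk, binaryBiproductTriangle]) (by simp [Triangle.mk, binaryBiproductTriangle])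
  · apply biprod.hom_ext
    · apply (isZero_zero D).eq_of_tgt
    · simp [Triangle.mk, binaryBiproductTriangle]
  · apply (isZero_zero D).eq_of_src

/-- `A ≅ A ⊞ 0`. -/
noncomputable def biprodZeroIso (A : D) : A ≅ A ⊞ (0 : D) where
  hom := biprod.inl
  inv := biprod.fst
  inv_hom_id := by
    apply biprod.hom_ext
    · simp
    · apply (isZero_zero D).eq_of_tgt

end Lemma48Aux

/-- **Lemma 4.8**: splitting off direct summands from (co)cones in triangles. -/
theorem triangle_biprod_splitting
    {D : Type u} [Category.{v} D] [Preadditive D] [HasZeroObject D] [HasShift D ℤ]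
    [∀ n : ℤ, (shiftFunctor D n).Additive] [Pretriangulated D]
    [HasBinaryBiproducts D] :
    (∀ (A B C₀ D₀ : D) (f : A ⟶ B) (g : B ⟶ C₀ ⊞ D₀) (α : C₀ ⊞ D₀ ⟶ A⟦(1 : ℤ)⟧),
      Triangle.mk f g α ∈ (distTriang D) →
      (∀ φ : D₀ ⟶ A⟦(1 : ℤ)⟧, φ = 0) →
      ∀ (B' : D) (f' : A ⟶ B') (g' : B' ⟶ C₀),
        Triangle.mk f' g' (biprod.inl ≫ α) ∈ (distTriang D) →
        Nonempty (B ≅ B' ⊞ D₀)) ∧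
    (∀ (A B C₀ D₀ : D) (α : A ⟶ B ⊞ C₀) (g : B ⊞ C₀ ⟶ D₀) (h : D₀ ⟶ A⟦(1 : ℤ)⟧),
      Triangle.mk α g h ∈ (distTriang D) →
      (∀ φ : A ⟶ C₀, φ = 0) →
      ∀ (D' : D) (g' : B ⟶ D') (h' : D' ⟶ A⟦(1 : ℤ)⟧),
        Triangle.mk (α ≫ biprod.fst) g' h' ∈ (distTriang D) →
        Nonempty (D₀ ≅ D' ⊞ C₀))  := by
  constructor
  · intro A B C₀ D₀ f g α hT hφ B' f' g' hT'
    have h0 : biprod.inr ≫ α = 0 := hφ _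
    have hS := biprodTriangle_distinguished _ _ hT' (zeroIdTriangle_distinguished D₀)
    have hT'' : Triangle.mk (f' ≫ biprod.inl : A ⟶ B' ⊞ D₀)
        (biprod.map g' (𝟙 D₀)) (α : C₀ ⊞ D₀ ⟶ A⟦(1 : ℤ)⟧) ∈ distTriang D := by
      refine isomorphic_distinguished _ hS _ ?_
      refine Triangle.isoMk _ _ (biprodZeroIso A) (Iso.refl _) (Iso.refl _) ?_ ?_ ?_
      · dsimp [biprodZeroIso]; simp [Triangle.mk]; erw [biprod.inl_map]
      · simp [Triangle.mk]
      · dsimp [biprodZeroIso]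
        apply biprod.hom_ext'
        · simp [Triangle.mk]
        · simp [Triangle.mk, reassoc_of% h0]
    obtain ⟨b, hb₁, hb₂⟩ := complete_distinguished_triangle_morphism₂ _ _ hT hT''
      (𝟙 A) (𝟙 _) (by simp [Triangle.mk])
    let φ : Triangle.mk f g α ⟶ Triangle.mk (f' ≫ biprod.inl) (biprod.map g' (𝟙 D₀)) α :=
      Triangle.homMk _ _ (𝟙 A) b (𝟙 _) hb₁ (by simpa [Triangle.mk] using hb₂) (by simp [Triangle.mk])
    have : IsIso φ.hom₂ := isIso₂_of_isIso₁₃ φ hT hT''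
      (by dsimp [φ]; exact IsIso.id _) (by dsimp [φ]; exact IsIso.id _)
    exact ⟨@asIso _ _ _ _ φ.hom₂ this⟩
  · intro A B C₀ D₀ α g h hT hφ D' g' h' hT'
    have h0 : α ≫ biprod.snd = 0 := hφ _
    have hS := biprodTriangle_distinguished _ _ hT' (zeroIdTriangle_distinguished C₀)
    have hT'' : Triangle.mk (α : A ⟶ B ⊞ C₀) (biprod.map g' (𝟙 C₀))
        (biprod.fst ≫ h' : D' ⊞ C₀ ⟶ A⟦(1 : ℤ)⟧) ∈ distTriang D := by
      refine isomorphic_distinguished _ hS _ ?_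
      refine Triangle.isoMk _ _ (biprodZeroIso A) (Iso.refl _) (Iso.refl _) ?_ ?_ ?_
      · dsimp [biprodZeroIso]
        apply biprod.hom_ext
        · simp [Triangle.mk]; erw [biprod.map_fst]; simp
        · simp [Triangle.mk, h0]; erw [biprod.map_snd]; simp
      · simp [Triangle.mk]
      · dsimp [biprodZeroIso]
        apply biprod.hom_ext'
        · simp [Triangle.mk]
        · simp [Triangle.mk]
    obtain ⟨c, hc₁, hc₂⟩ := complete_distinguished_triangle_morphism _ _ hT hT''
      (𝟙 A) (𝟙 _) (by simp [Triangle.mk])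
    let φ : Triangle.mk α g h ⟶ Triangle.mk α (biprod.map g' (𝟙 C₀)) (biprod.fst ≫ h') :=
      Triangle.homMk _ _ (𝟙 A) (𝟙 _) c (by simp [Triangle.mk]) (by simpa [Triangle.mk] using hc₁) (by simpa [Triangle.mk] using hc₂)
    have : IsIso φ.hom₃ := isIso₃_of_isIso₁₂ φ hT hT''
      (by dsimp [φ]; exact IsIso.id _) (by dsimp [φ]; exact IsIso.id _)
    exact ⟨@asIso _ _ _ _ φ.hom₃ this⟩


end Glue
end
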